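/- arXiv:1604.04390 — 3 statements merged into one kernel-verified Lean document; each statement's English description precedes it below -/
import Mathlib

section
/- Let σ : S → A be a pre-strategy. The following are equivalent: (i) σ is courteous and receptive; (ii) both σ : (C(S), ⊇⁻) → (C(A), ⊇⁻) and σ : (C(S), ⊆⁺) → (C(A), ⊆⁺) are discrete fibrations; (iii) σ : (C(S), ⊑_S) → (C(A), ⊑_A) is a discrete fibration for the Scott orders. -/
/-- An event structure presented as raw data: a set of events, a causality
relation and a consistency predicate on (finite) sets of events. -/
structure ES where
  Evt : Type
  le : Evt → Evt → Prop
  Con : Set (Set Evt)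

namespace ES

/-- Strict causality. -/
def lt (E : ES) (a b : E.Evt) : Prop := E.le a b ∧ a ≠ b

/-- The axioms of event structures: `le` is a partial order, causes `[e]` are
finite, consistency is a nonempty collection of finite sets, closed under
subsets, containing all singletons, and closed under adding causal
dependencies. -/
def IsES (E : ES) : Prop :=
  (∀ e, E.le e e) ∧
  (∀ a b c, E.le a b → E.le b c → E.le a c) ∧
  (∀ a b, E.le a b → E.le b a → a = b) ∧
  (∀ e, {e' | E.le e' e}.Finite) ∧
  E.Con.Nonempty ∧
  (∀ X ∈ E.Con, X.Finite) ∧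
  (∀ e, ({e} : Set E.Evt) ∈ E.Con) ∧
  (∀ X ∈ E.Con, ∀ Y, Y ⊆ X → Y ∈ E.Con) ∧
  (∀ X ∈ E.Con, ∀ e ∈ X, ∀ e', E.le e' e → insert e' X ∈ E.Con)

/-- A (finite) configuration: a finite, consistent and down-closed set of events. -/
def Config (E : ES) (x : Set E.Evt) : Prop :=
  x.Finite ∧ (∀ Y, Y ⊆ x → Y.Finite → Y ∈ E.Con) ∧
  ∀ e ∈ x, ∀ e', E.le e' e → e' ∈ x

/-- Immediate causality `e ⇢ e'`. -/
def imc (E : ES) (a b : E.Evt) : Prop :=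
  E.lt a b ∧ ∀ c, E.le a c → E.le c b → c = a ∨ c = b

/-- Simple parallel composition of event structures. -/
def par (E F : ES) : ES where
  Evt := E.Evt ⊕ F.Evt
  le := fun p q =>
    match p, q with
    | Sum.inl a, Sum.inl b => E.le a b
    | Sum.inr a, Sum.inr b => F.le a b
    | _, _ => False
  Con := {X | Sum.inl ⁻¹' X ∈ E.Con ∧ Sum.inr ⁻¹' X ∈ F.Con}

/-- Projection (hiding): restrict an event structure to a subset `V` of events. -/
def proj (E : ES) (V : Set E.Evt) : ES where
  Evt := ↥V
  le := fun a b => E.le a.val b.val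
  Con := {X | Subtype.val '' X ∈ E.Con}

end ES

/-- A (total) map of event structures: preserves configurations and is
injective on each configuration. -/
def IsMap (E F : ES) (f : E.Evt → F.Evt) : Prop :=
  (∀ x, E.Config x → F.Config (f '' x)) ∧ ∀ x, E.Config x → Set.InjOn f x
/-- An event structure with polarities (`true` = positive/Player,
`false` = negative/Opponent). -/
structure ESP extends ES where
  pol : Evt → Bool

namespace ESP

/-- The dual game: polarities reversed. -/
def dual (A : ESP) : ESP where
  toES := A.toES
  pol := fun a => !A.pol a

/-- Simple parallel composition of games. -/
def par (A B : ESP) : ESP where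
  toES := A.toES.par B.toES
  pol := Sum.elim A.pol B.pol

end ESP

/-- A pre-strategy on the game `A`: a polarity-preserving map of event
structures `σ : S → A`. -/
def IsPreStrategy (S A : ESP) (σ : S.Evt → A.Evt) : Prop :=
  IsMap S.toES A.toES σ ∧ ∀ s, A.pol (σ s) = S.pol s

/-- `polExt pol b x y` means `x ⊆ y` and all events of `y \ x` have polarity `b`;
so `polExt pol true x y` is `x ⊆⁺ y` and `polExt pol false x y` is `x ⊆⁻ y`. -/
def polExt {α : Type} (pol : α → Bool) (b : Bool) (x y : Set α) : Prop :=
  x ⊆ y ∧ ∀ a ∈ y, a ∉ x → pol a = b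

/-- The Scott order: `x ⊑ y` iff `x ⊇⁻ (x ∩ y) ⊆⁺ y`. -/
def scottLE {α : Type} (pol : α → Bool) (x y : Set α) : Prop :=
  polExt pol false (x ∩ y) x ∧ polExt pol true (x ∩ y) y

/-- Courtesy: immediate causal links other than `− ⇢ +` are sent to immediate
causal links of the game. -/
def Courteous (S A : ESP) (σ : S.Evt → A.Evt) : Prop :=
  ∀ s s', S.toES.imc s s' → (S.pol s, S.pol s') ≠ (false, true) →
    A.toES.imc (σ s) (σ s')

/-- Receptivity: every negative extension of `σ x` in the game is matched by a
unique extension of `x`. -/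
def Receptive (S A : ESP) (σ : S.Evt → A.Evt) : Prop :=
  ∀ x, S.toES.Config x → ∀ a, A.pol a = false → a ∉ σ '' x →
    A.toES.Config (insert a (σ '' x)) →
    ∃! s, s ∉ x ∧ S.toES.Config (insert s x) ∧ σ s = a
/-- `σ` is a discrete fibration from `(C(S), rS)` to `(C(A), rA)`: it is
monotone and every `y` with `rA y (σ x)` lifts to a unique `x'` with
`rS x' x` and `σ x' = y`. -/
def DiscFibOn (S A : ES) (σ : S.Evt → A.Evt)
    (rS : Set S.Evt → Set S.Evt → Prop)
    (rA : Set A.Evt → Set A.Evt → Prop) : Prop :=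
  (∀ x x', S.Config x → S.Config x' → rS x x' → rA (σ '' x) (σ '' x')) ∧
  ∀ x, S.Config x → ∀ y, A.Config y → rA y (σ '' x) →
    ∃! x', S.Config x' ∧ rS x' x ∧ σ '' x' = y

/-- The order of the poset `(C, ⊇⁻)`: `x ≤ y` iff `x ⊇⁻ y`, i.e. `y ⊆⁻ x`. -/
def negLE {α : Type} (pol : α → Bool) (x y : Set α) : Prop :=
  polExt pol false y x

/-- The order of the poset `(C, ⊆⁺)`: `x ≤ y` iff `x ⊆⁺ y`. -/
def posLE {α : Type} (pol : α → Bool) (x y : Set α) : Prop :=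
  polExt pol true x y

namespace AuxES

variable {E : ES}

lemma config_of_subset {x z : Set E.Evt} (hx : E.Config x) (hzx : z ⊆ x)
    (hdc : ∀ e ∈ z, ∀ e', E.le e' e → e' ∈ z) : E.Config z :=
  ⟨hx.1.subset hzx, fun Y hY hYf => hx.2.1 Y (hY.trans hzx) hYf, hdc⟩


lemma con_union_causes (hE : E.IsES) {X : Set E.Evt} (hX : X ∈ E.Con) {e} (he : e ∈ X)
    {Y : Set E.Evt} (hYf : Y.Finite) (hY : Y ⊆ {e' | E.le e' e}) : X ∪ Y ∈ E.Con := by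
  obtain ⟨hrefl, htrans, hanti, hfin, -, -, hsing, hsub, hadd⟩ := hE
  revert hY
  refine Set.Finite.induction_on (motive := fun Y _ => Y ⊆ {e' | E.le e' e} → X ∪ Y ∈ E.Con)
    _ hYf (fun _ => by simpa using hX) ?_
  intro a Y haY hYfin ih hsub'
  have h1 : X ∪ Y ∈ E.Con := ih (fun b hb => hsub' (Set.mem_insert_of_mem _ hb))
  have h2 : insert a (X ∪ Y) ∈ E.Con :=
    hadd _ h1 e (Or.inl he) a (hsub' (Set.mem_insert _ _))
  rw [Set.union_insert]; exact h2

lemma downset_config (hE : E.IsES) (e : E.Evt) : E.Config {e' | E.le e' e} := by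
  have hcon : {e' | E.le e' e} ∈ E.Con := by
    have h := con_union_causes hE (hE.2.2.2.2.2.2.1 e) (Set.mem_singleton e)
      (hE.2.2.2.1 e) (le_refl _)
    have heq : ({e} : Set E.Evt) ∪ {e' | E.le e' e} = {e' | E.le e' e} := by
      apply Set.union_eq_self_of_subset_left
      rw [Set.singleton_subset_iff]; exact hE.1 e
    rwa [heq] at h
  exact ⟨hE.2.2.2.1 e, fun Y hY _ => hE.2.2.2.2.2.2.2.1 _ hcon Y hY,
    fun a ha b hb => hE.2.1 b a e hb ha⟩

lemma exists_min (hE : E.IsES) {P : Set E.Evt} (hfin : P.Finite) (hne : P.Nonempty) :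
    ∃ m ∈ P, ∀ b ∈ P, E.le b m → b = m := by
  obtain ⟨hrefl, htrans, hanti, -⟩ := hE
  revert hne
  refine Set.Finite.induction_on
    (motive := fun P _ => P.Nonempty → ∃ m ∈ P, ∀ b ∈ P, E.le b m → b = m) _ hfin
    (by simp) ?_
  intro a s has hsfin ih _
  by_cases hs : s.Nonempty
  · obtain ⟨m, hm, hmin⟩ := ih hs
    by_cases ham : E.le a m ∧ a ≠ m
    · refine ⟨a, Set.mem_insert _ _, ?_⟩
      rintro b (rfl | hb) hba
      · rfl
      · have hbm : b = m := hmin b hb (htrans b a m hba ham.1)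
        exact absurd (hanti a m ham.1 (hbm ▸ hba)) ham.2
    · refine ⟨m, Set.mem_insert_of_mem _ hm, ?_⟩
      rintro b (rfl | hb) hbm
      · by_contra hne'; exact ham ⟨hbm, hne'⟩
      · exact hmin b hb hbm
  · refine ⟨a, Set.mem_insert _ _, ?_⟩
    rintro b (rfl | hb) _
    · rfl
    · exact absurd ⟨b, hb⟩ hs

lemma exists_max (hE : E.IsES) {P : Set E.Evt} (hfin : P.Finite) (hne : P.Nonempty) :
    ∃ m ∈ P, ∀ b ∈ P, E.le m b → b = m := by
  obtain ⟨hrefl, htrans, hanti, -⟩ := hE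
  revert hne
  refine Set.Finite.induction_on
    (motive := fun P _ => P.Nonempty → ∃ m ∈ P, ∀ b ∈ P, E.le m b → b = m) _ hfin
    (by simp) ?_
  intro a s has hsfin ih _
  by_cases hs : s.Nonempty
  · obtain ⟨m, hm, hmin⟩ := ih hs
    by_cases ham : E.le m a ∧ a ≠ m
    · refine ⟨a, Set.mem_insert _ _, ?_⟩
      rintro b (rfl | hb) hba
      · rfl
      · have hbm : b = m := hmin b hb (htrans m a b ham.1 hba)
        exact absurd (hanti a m (hbm ▸ hba) ham.1) ham.2
    · refine ⟨m, Set.mem_insert_of_mem _ hm, ?_⟩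
      rintro b (rfl | hb) hbm
      · by_contra hne'; exact ham ⟨hbm, hne'⟩
      · exact hmin b hb hbm
  · refine ⟨a, Set.mem_insert _ _, ?_⟩
    rintro b (rfl | hb) _
    · rfl
    · exact absurd ⟨b, hb⟩ hs

/-- If t < u then there is c with t ≤ c and c ⇢ u. -/
lemma exists_imc_left (hE : E.IsES) {t u : E.Evt} (h : E.lt t u) :
    ∃ c, E.le t c ∧ E.imc c u := by
  have hfin : {c | E.le t c ∧ E.le c u ∧ c ≠ u}.Finite :=
    (hE.2.2.2.1 u).subset (fun c hc => hc.2.1)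
  have hne : {c | E.le t c ∧ E.le c u ∧ c ≠ u}.Nonempty := ⟨t, hE.1 t, h.1, h.2⟩
  obtain ⟨m, hm, hmax⟩ := exists_max hE hfin hne
  refine ⟨m, hm.1, ⟨⟨hm.2.1, hm.2.2⟩, ?_⟩⟩
  intro c hmc hcu
  by_cases hcu' : c = u
  · exact Or.inr hcu'
  · exact Or.inl (hmax c ⟨hE.2.1 t m c hm.1 hmc, hcu, hcu'⟩ hmc)

/-- If u < s' then there is c with u ⇢ c and c ≤ s'. -/
lemma exists_imc_right (hE : E.IsES) {u s' : E.Evt} (h : E.lt u s') :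
    ∃ c, E.imc u c ∧ E.le c s' := by
  have hfin : {c | E.le u c ∧ E.le c s' ∧ c ≠ u}.Finite :=
    (hE.2.2.2.1 s').subset (fun c hc => hc.2.1)
  have hne : {c | E.le u c ∧ E.le c s' ∧ c ≠ u}.Nonempty := ⟨s', h.1, hE.1 s', Ne.symm h.2⟩
  obtain ⟨m, hm, hmin⟩ := exists_min hE hfin hne
  refine ⟨m, ⟨⟨hm.1, Ne.symm hm.2.2⟩, ?_⟩, hm.2.1⟩
  intro c huc hcm
  by_cases hcu : c = u
  · exact Or.inl hcu
  · exact Or.inr (hmin c ⟨huc, hE.2.1 c m s' hcm hm.2.1, hcu⟩ hcm)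

end AuxES

namespace AuxStrat
open AuxES

variable {S A : ESP} {σ : S.Evt → A.Evt}

lemma mem_of_img (hσ : IsPreStrategy S A σ) {x z : Set S.Evt} (hx : S.toES.Config x)
    (hz : z ⊆ x) {t} (ht : t ∈ x) (h : σ t ∈ σ '' z) : t ∈ z := by
  obtain ⟨u, hu, he⟩ := h
  exact (hσ.1.2 x hx (hz hu) ht he) ▸ hu

lemma img_inter (hσ : IsPreStrategy S A σ) {x x' : Set S.Evt}
    (hx' : S.toES.Config x') (hx : S.toES.Config x)
    (hneg : ∀ t ∈ x', t ∉ x → S.pol t = false)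
    (hpos : ∀ t ∈ x, t ∉ x' → S.pol t = true) :
    σ '' (x' ∩ x) = σ '' x' ∩ σ '' x := by
  apply Set.Subset.antisymm
  · exact Set.subset_inter (Set.image_mono Set.inter_subset_left)
      (Set.image_mono Set.inter_subset_right)
  · rintro a ⟨⟨t', ht', rfl⟩, ⟨t, ht, he⟩⟩
    by_cases h1 : t' ∈ x
    · exact ⟨t', ⟨ht', h1⟩, rfl⟩
    · by_cases h2 : t ∈ x'
      · exact ⟨t, ⟨h2, ht⟩, he⟩
      · have hf : A.pol (σ t') = false := by rw [hσ.2]; exact hneg t' ht' h1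
        have htr : A.pol (σ t) = true := by rw [hσ.2]; exact hpos t ht h2
        rw [he] at htr; rw [htr] at hf; exact absurd hf (by simp)

lemma single_ext (hσ : IsPreStrategy S A σ) {x x' : Set S.Evt}
    (hx : S.toES.Config x) (hx' : S.toES.Config x') (hsub : x ⊆ x') {a}
    (ha : a ∉ σ '' x) (him : σ '' x' = insert a (σ '' x)) :
    ∃ s, s ∉ x ∧ x' = insert s x ∧ σ s = a := by
  have hkey : ∀ t ∈ x', t ∉ x → σ t = a := by
    intro t ht htx
    have h1 : σ t ∈ insert a (σ '' x) := him ▸ Set.mem_image_of_mem σ ht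
    rcases h1 with h1 | h1
    · exact h1
    · exact absurd (mem_of_img hσ hx' hsub ht h1) htx
  have hne : ∃ s ∈ x', s ∉ x := by
    by_contra h
    push_neg at h
    have : x' = x := Set.Subset.antisymm h hsub
    rw [this] at him
    exact ha (him ▸ Set.mem_insert a _)
  obtain ⟨s, hs, hsx⟩ := hne
  refine ⟨s, hsx, ?_, hkey s hs hsx⟩
  apply Set.Subset.antisymm
  · intro t ht
    by_cases htx : t ∈ x
    · exact Set.mem_insert_of_mem _ htx
    · have : σ t = σ s := (hkey t ht htx).trans (hkey s hs hsx).symm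
      rw [hσ.1.2 x' hx' ht hs this]; exact Set.mem_insert _ _
  · rw [Set.insert_subset_iff]; exact ⟨hs, hsub⟩

lemma mono_neg (hσ : IsPreStrategy S A σ) {x x' : Set S.Evt}
    (hx : S.toES.Config x) (hx' : S.toES.Config x') (h : negLE S.pol x x') :
    negLE A.pol (σ '' x) (σ '' x') := by
  obtain ⟨hsub, hp⟩ := h
  refine ⟨Set.image_mono hsub, ?_⟩
  rintro a ⟨t, ht, rfl⟩ hna
  rw [hσ.2]
  exact hp t ht (fun h' => hna (Set.mem_image_of_mem σ h'))

lemma mono_pos (hσ : IsPreStrategy S A σ) {x x' : Set S.Evt}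
    (hx : S.toES.Config x) (hx' : S.toES.Config x') (h : posLE S.pol x x') :
    posLE A.pol (σ '' x) (σ '' x') := by
  obtain ⟨hsub, hp⟩ := h
  refine ⟨Set.image_mono hsub, ?_⟩
  rintro a ⟨t, ht, rfl⟩ hna
  rw [hσ.2]
  exact hp t ht (fun h' => hna (Set.mem_image_of_mem σ h'))

lemma mono_scott (hσ : IsPreStrategy S A σ) {x x' : Set S.Evt}
    (hx : S.toES.Config x) (hx' : S.toES.Config x') (h : scottLE S.pol x x') :
    scottLE A.pol (σ '' x) (σ '' x') := by
  obtain ⟨⟨hsub1, hp1⟩, ⟨hsub2, hp2⟩⟩ := h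
  have hii : σ '' (x ∩ x') = σ '' x ∩ σ '' x' :=
    img_inter hσ hx hx' (fun t ht htx => hp1 t ht (fun hc => htx hc.2))
      (fun t ht htx => hp2 t ht (fun hc => htx hc.1))
  constructor
  · refine ⟨by rw [← hii]; exact Set.image_mono hsub1, ?_⟩
    rintro a ⟨t, ht, rfl⟩ hna
    rw [← hii] at hna
    rw [hσ.2]
    exact hp1 t ht (fun h' => hna (Set.mem_image_of_mem σ h'))
  · refine ⟨by rw [← hii]; exact Set.image_mono hsub2, ?_⟩
    rintro a ⟨t, ht, rfl⟩ hna
    rw [← hii] at hna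
    rw [hσ.2]
    exact hp2 t ht (fun h' => hna (Set.mem_image_of_mem σ h'))

end AuxStrat
namespace AuxStrat2
open AuxES AuxStrat

variable {S A : ESP} {σ : S.Evt → A.Evt}

/-- Positive lifting: from courtesy. -/
lemma pos_lift (hS : S.toES.IsES) (hσ : IsPreStrategy S A σ) (hc : Courteous S A σ)
    {x : Set S.Evt} {y : Set A.Evt} (hx : S.toES.Config x) (hy : A.toES.Config y)
    (h : posLE A.pol y (σ '' x)) :
    ∃! x', S.toES.Config x' ∧ posLE S.pol x' x ∧ σ '' x' = y := by
  obtain ⟨hsub, hp⟩ := h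
  set x' : Set S.Evt := {s | s ∈ x ∧ σ s ∈ y} with hx'def
  have hx'sub : x' ⊆ x := fun s hs => hs.1
  have hdc : ∀ s' ∈ x', ∀ s, S.toES.le s s' → s ∈ x' := by
    intro s' hs' s hss'
    have hsx : s ∈ x := hx.2.2 s' hs'.1 s hss'
    refine ⟨hsx, ?_⟩
    by_contra hsy
    set Bad : Set S.Evt := {u | S.toES.le u s' ∧ u ∈ x ∧ σ u ∉ y} with hBad
    have hBfin : Bad.Finite := (hS.2.2.2.1 s').subset (fun u hu => hu.1)
    have hBne : Bad.Nonempty := ⟨s, hss', hsx, hsy⟩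
    obtain ⟨m, hm, hmax⟩ := exists_max hS hBfin hBne
    have hms' : m ≠ s' := fun he => hm.2.2 (he ▸ hs'.2)
    obtain ⟨c, hmc, hcs'⟩ := exists_imc_right hS ⟨hm.1, hms'⟩
    have hcx : c ∈ x := hx.2.2 s' hs'.1 c hcs'
    have hcy : σ c ∈ y := by
      by_contra hcy
      have : c ∈ Bad := ⟨hcs', hcx, hcy⟩
      exact hmc.1.2 (hmax c this hmc.1.1).symm
    have hpolm : S.pol m = true := by
      rw [← hσ.2]
      exact hp (σ m) (Set.mem_image_of_mem σ hm.2.1) hm.2.2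
    have himc : A.toES.imc (σ m) (σ c) := by
      apply hc m c hmc
      simp [hpolm]
    exact hm.2.2 (hy.2.2 (σ c) hcy (σ m) himc.1.1)
  have hx'conf : S.toES.Config x' := config_of_subset hx hx'sub hdc
  have hx'pos : posLE S.pol x' x := by
    refine ⟨hx'sub, ?_⟩
    intro t ht htx'
    have h1 : σ t ∉ y := fun hy' => htx' ⟨ht, hy'⟩
    rw [← hσ.2]
    exact hp (σ t) (Set.mem_image_of_mem σ ht) h1
  have hx'img : σ '' x' = y := by
    apply Set.Subset.antisymm
    · rintro a ⟨t, ht, rfl⟩; exact ht.2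
    · intro a hay
      obtain ⟨t, ht, rfl⟩ := hsub hay
      exact ⟨t, ⟨ht, hay⟩, rfl⟩
  refine ⟨x', ⟨hx'conf, hx'pos, hx'img⟩, ?_⟩
  rintro x'' ⟨hx''conf, ⟨hsub'', hp''⟩, him''⟩
  apply Set.Subset.antisymm
  · intro s hs
    exact ⟨hsub'' hs, him'' ▸ Set.mem_image_of_mem σ hs⟩
  · intro s hs
    exact mem_of_img hσ hx hsub'' hs.1 (him'' ▸ hs.2)

/-- Negative lifting existence, from receptivity. -/
lemma neg_lift_ex (hS : S.toES.IsES) (hA : A.toES.IsES) (hσ : IsPreStrategy S A σ)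
    (hr : Receptive S A σ) {x : Set S.Evt} {y : Set A.Evt}
    (hx : S.toES.Config x) (hy : A.toES.Config y) (hsub : σ '' x ⊆ y)
    (hnegd : ∀ a ∈ y, a ∉ σ '' x → A.pol a = false) :
    ∃ x', S.toES.Config x' ∧ x ⊆ x' ∧ (∀ s ∈ x', s ∉ x → S.pol s = false) ∧
      σ '' x' = y := by
  obtain ⟨n, hn⟩ : ∃ n, (y \ σ '' x).ncard < n := ⟨_, Nat.lt_succ_self _⟩
  induction n generalizing x with
  | zero => omega
  | succ n ih =>
    by_cases h0 : y ⊆ σ '' x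
    · exact ⟨x, hx, subset_rfl, fun s hs hsx => absurd hs hsx, Set.Subset.antisymm hsub h0⟩
    · have hDne : (y \ σ '' x).Nonempty := Set.nonempty_of_ssubset ⟨hsub, h0⟩
      have hDfin : (y \ σ '' x).Finite := hy.1.subset Set.diff_subset
      obtain ⟨a, ha, hamin⟩ := exists_min hA hDfin hDne
      have hiconf : A.toES.Config (insert a (σ '' x)) := by
        refine ⟨((hx.1.image σ).insert a), ?_, ?_⟩
        · intro Y hY hYf
          exact hy.2.1 Y (hY.trans (Set.insert_subset ha.1 hsub)) hYf
        · rintro e (rfl | he) e' hle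
          · by_cases h1 : e' ∈ σ '' x
            · exact Set.mem_insert_of_mem _ h1
            · have : e' ∈ y \ σ '' x := ⟨hy.2.2 e ha.1 e' hle, h1⟩
              exact Or.inl (hamin e' this hle)
          · exact Set.mem_insert_of_mem _ ((hσ.1.1 x hx).2.2 e he e' hle)
      obtain ⟨s, ⟨hsx, hsconf, hsa⟩, -⟩ :=
        hr x hx a (hnegd a ha.1 ha.2) ha.2 hiconf
      have himg : σ '' (insert s x) = insert a (σ '' x) := by
        rw [Set.image_insert_eq, hsa]
      have hsub2 : σ '' (insert s x) ⊆ y := by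
        rw [himg]; exact Set.insert_subset ha.1 hsub
      have hnegd2 : ∀ b ∈ y, b ∉ σ '' (insert s x) → A.pol b = false := by
        intro b hb hbi
        exact hnegd b hb (fun hb' => hbi (by rw [himg]; exact Set.mem_insert_of_mem a hb'))
      have hcard : (y \ σ '' (insert s x)).ncard < n := by
        have he1 : y \ σ '' (insert s x) = (y \ σ '' x) \ {a} := by
          rw [himg]; ext b; simp [Set.mem_diff, Set.mem_insert_iff]; tauto
        have := Set.ncard_diff_singleton_lt_of_mem ha hDfin
        rw [he1]; omega
      obtain ⟨x', hx'conf, hx'sub, hx'neg, hx'img⟩ := ih hsconf hsub2 hnegd2 hcard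
      refine ⟨x', hx'conf, (Set.subset_insert s x).trans hx'sub, ?_, hx'img⟩
      intro t ht htx
      by_cases hts : t = s
      · rw [hts, ← hσ.2, hsa]; exact hnegd a ha.1 ha.2
      · exact hx'neg t ht (fun h' => h'.elim (fun h'' => hts h'') htx)

/-- Negative lifting uniqueness (one inclusion), from courtesy + receptivity. -/
lemma neg_uniq_sub (hS : S.toES.IsES) (hA : A.toES.IsES) (hσ : IsPreStrategy S A σ)
    (hc : Courteous S A σ) (hr : Receptive S A σ) {x x₁ x₂ : Set S.Evt}
    (hx : S.toES.Config x) (hx₁ : S.toES.Config x₁) (hx₂ : S.toES.Config x₂)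
    (hsub1 : x ⊆ x₁) (hneg1 : ∀ s ∈ x₁, s ∉ x → S.pol s = false)
    (hsub2 : x ⊆ x₂) (hneg2 : ∀ s ∈ x₂, s ∉ x → S.pol s = false)
    (him : σ '' x₁ = σ '' x₂) : x₁ ⊆ x₂ := by
  suffices key : ∀ n, ∀ s ∈ x₁, ({t | S.toES.le t s}).ncard < n → s ∈ x₂ by
    intro s hs
    exact key (({t | S.toES.le t s}).ncard + 1) s hs (Nat.lt_succ_self _)
  intro n
  induction n with
  | zero => omega
  | succ n ih =>
    intro s hs hcard
    by_cases hsx : s ∈ x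
    · exact hsub2 hsx
    set w : Set S.Evt := x ∪ {t | t ∈ x₁ ∧ S.toES.lt t s} with hwdef
    have hwsub1 : w ⊆ x₁ := by
      rintro t (ht | ht); exacts [hsub1 ht, ht.1]
    have hwsub2 : w ⊆ x₂ := by
      rintro t (ht | ht)
      · exact hsub2 ht
      · apply ih t ht.1
        have hss : {u | S.toES.le u t} ⊂ {u | S.toES.le u s} := by
          constructor
          · intro u hu; exact hS.2.1 u t s hu ht.2.1
          · intro hcon
            have : S.toES.le s t := hcon (hS.1 s)
            exact ht.2.2 (hS.2.2.1 t s ht.2.1 this)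
        have := Set.ncard_lt_ncard hss (hS.2.2.2.1 s)
        omega
    have hwdc : ∀ e ∈ w, ∀ e', S.toES.le e' e → e' ∈ w := by
      rintro e (he | he) e' hle
      · exact Or.inl (hx.2.2 e he e' hle)
      · refine Or.inr ⟨hx₁.2.2 e he.1 e' hle, hS.2.1 e' e s hle he.2.1, ?_⟩
        rintro rfl
        exact he.2.2 (hS.2.2.1 e e' he.2.1 hle)
    have hwconf : S.toES.Config w := config_of_subset hx₁ hwsub1 hwdc
    have hsw : s ∉ w := by
      rintro (h | h); exacts [hsx h, h.2.2 rfl]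
    have hswconf : S.toES.Config (insert s w) := by
      refine config_of_subset hx₁ ?_ ?_
      · exact Set.insert_subset hs hwsub1
      · rintro e (rfl | he) e' hle
        · by_cases h1 : e' = e
          · exact Or.inl h1
          · exact Or.inr (Or.inr ⟨hx₁.2.2 e hs e' hle, hle, h1⟩)
        · exact Set.mem_insert_of_mem _ (hwdc e he e' hle)
    have hanw : σ s ∉ σ '' w := by
      rintro ⟨t, ht, he⟩
      exact hsw (hσ.1.2 x₁ hx₁ (hwsub1 ht) hs he ▸ ht)
    have hpola : A.pol (σ s) = false := by rw [hσ.2]; exact hneg1 s hs hsx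
    have hinsconf : A.toES.Config (insert (σ s) (σ '' w)) := by
      rw [← Set.image_insert_eq]
      exact hσ.1.1 _ hswconf
    obtain ⟨s₀, hs₀, huniq⟩ := hr w hwconf (σ s) hpola hanw hinsconf
    have hs_lift : s = s₀ := huniq s ⟨hsw, hswconf, rfl⟩
    -- find the witness in x₂
    have : σ s ∈ σ '' x₂ := him ▸ Set.mem_image_of_mem σ hs
    obtain ⟨u, hu, hue⟩ := this
    have hux : u ∉ x := by
      intro h'
      exact hanw (hue ▸ Set.mem_image_of_mem σ (Or.inl h'))
    have huw : u ∉ w := by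
      intro h'
      exact hanw (hue ▸ Set.mem_image_of_mem σ h')
    have hpolu : S.pol u = false := hneg2 u hu hux
    have himcw : ∀ c, S.toES.imc c u → c ∈ w := by
      intro c hcu
      have hcx₂ : c ∈ x₂ := hx₂.2.2 u hu c hcu.1.1
      have himcA : A.toES.imc (σ c) (σ u) := by
        apply hc c u hcu
        simp [hpolu]
      have hscw : σ c ∈ insert (σ s) (σ '' w) := by
        apply hinsconf.2.2 (σ u) _ (σ c) himcA.1.1
        rw [hue]; exact Set.mem_insert _ _
      rcases hscw with h' | h'
      · exact absurd (h'.trans hue.symm) himcA.1.2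
      · obtain ⟨t', ht', he'⟩ := h'
        exact hσ.1.2 x₂ hx₂ hcx₂ (hwsub2 ht') (he'.symm ▸ rfl) ▸ ht'
    have hudc : ∀ e', S.toES.le e' u → e' ∈ insert u w := by
      intro e' hle
      by_cases h1 : e' = u
      · exact Or.inl h1
      · obtain ⟨c, hec, hcu⟩ := exists_imc_left hS ⟨hle, h1⟩
        exact Or.inr (hwdc c (himcw c hcu) e' hec)
    have huconf : S.toES.Config (insert u w) := by
      refine config_of_subset hx₂ (Set.insert_subset hu hwsub2) ?_
      rintro e (rfl | he) e' hle
      · exact hudc e' hle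
      · exact Set.mem_insert_of_mem _ (hwdc e he e' hle)
    have hu_lift : u = s₀ := huniq u ⟨huw, huconf, hue⟩
    rw [hs_lift, ← hu_lift]
    exact hu

/-- Receptivity from the negative fibration. -/
lemma recep_of_negfib (hS : S.toES.IsES) (hA : A.toES.IsES) (hσ : IsPreStrategy S A σ)
    (hnf : DiscFibOn S.toES A.toES σ (negLE S.pol) (negLE A.pol)) :
    Receptive S A σ := by
  intro x hx a hpola hanot hconf
  have hneg : negLE A.pol (insert a (σ '' x)) (σ '' x) := by
    refine ⟨Set.subset_insert _ _, ?_⟩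
    rintro b (rfl | hb) hbn
    · exact hpola
    · exact absurd hb hbn
  obtain ⟨x', ⟨hx'conf, ⟨hsub', hnegd'⟩, him'⟩, huniq⟩ :=
    hnf.2 x hx (insert a (σ '' x)) hconf hneg
  obtain ⟨s, hsx, hxeq, hsa⟩ := single_ext hσ hx hx'conf hsub' hanot him'
  refine ⟨s, ⟨hsx, hxeq ▸ hx'conf, hsa⟩, ?_⟩
  rintro s₂ ⟨hs₂x, hs₂conf, hs₂a⟩
  have h2 : insert s₂ x = x' := by
    apply huniq
    refine ⟨hs₂conf, ⟨Set.subset_insert _ _, ?_⟩, ?_⟩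
    · rintro t (rfl | ht) htn
      · rw [← hσ.2, hs₂a]; exact hpola
      · exact absurd ht htn
    · rw [Set.image_insert_eq, hs₂a]
  have : s₂ ∈ x' := h2 ▸ Set.mem_insert _ _
  rw [hxeq] at this
  rcases this with h | h
  · exact h
  · exact absurd h hs₂x

end AuxStrat2
namespace AuxStrat3
open AuxES AuxStrat AuxStrat2

variable {S A : ESP} {σ : S.Evt → A.Evt}

lemma v_config (hS : S.toES.IsES) {s s' : S.Evt} (himc : S.toES.imc s s') :
    S.toES.Config {t | S.toES.le t s' ∧ t ≠ s' ∧ t ≠ s} := by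
  refine config_of_subset (downset_config hS s') (fun t ht => ht.1) ?_
  rintro e ⟨hes', hns', hns⟩ e' hle
  refine ⟨hS.2.1 e' e s' hle hes', ?_, ?_⟩
  · intro h
    exact hns' (hS.2.2.1 e s' hes' (h ▸ hle))
  · intro h
    rcases himc.2 e (h ▸ hle) hes' with h2 | h2
    · exact hns h2
    · exact hns' h2

lemma maxclaim (hS : S.toES.IsES) (hσ : IsPreStrategy S A σ) {s s' : S.Evt}
    (himc : S.toES.imc s s') :
    ∀ t, S.toES.le t s' → t ≠ s' → ¬ A.toES.lt (σ s) (σ t) := by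
  intro t hts' hns' hlt
  have hts : t ≠ s := by
    rintro rfl
    exact hlt.2 rfl
  have hxconf : S.toES.Config {t | S.toES.le t s'} := downset_config hS s'
  set v : Set S.Evt := {t | S.toES.le t s' ∧ t ≠ s' ∧ t ≠ s} with hv
  have hvconf : S.toES.Config v := v_config hS himc
  have hvsub : v ⊆ {t | S.toES.le t s'} := fun u hu => hu.1
  have htv : t ∈ v := ⟨hts', hns', hts⟩
  have hsv : σ s ∈ σ '' v :=
    (hσ.1.1 v hvconf).2.2 (σ t) (Set.mem_image_of_mem σ htv) (σ s) hlt.1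
  obtain ⟨t', ht', he⟩ := hsv
  have hss' : S.toES.le s s' := himc.1.1
  have : t' = s := hσ.1.2 _ hxconf (hvsub ht') hss' he
  rw [this] at ht'
  exact ht'.2.2 rfl

lemma hat_config (hS : S.toES.IsES) (hA : A.toES.IsES) (hσ : IsPreStrategy S A σ)
    {s s' : S.Evt} (himc : S.toES.imc s s') (hnlt : ¬ A.toES.lt (σ s) (σ s')) :
    A.toES.Config (σ '' {t | S.toES.le t s'} \ {σ s}) := by
  have hxconf : S.toES.Config {t | S.toES.le t s'} := downset_config hS s'
  have hiconf : A.toES.Config (σ '' {t | S.toES.le t s'}) := hσ.1.1 _ hxconf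
  refine config_of_subset hiconf Set.diff_subset ?_
  rintro b ⟨hb, hbs⟩ b' hle
  refine ⟨hiconf.2.2 b hb b' hle, ?_⟩
  intro hb'
  have hb'e : b' = σ s := hb'
  obtain ⟨t, ht, he⟩ := hb
  have hlt : A.toES.lt (σ s) (σ t) := by
    refine ⟨?_, ?_⟩
    · rw [← hb'e, he]; exact hle
    · intro h
      exact hbs (Set.mem_singleton_iff.mpr (h.trans he).symm)
  by_cases h1 : t = s'
  · exact hnlt (h1 ▸ hlt)
  · exact maxclaim hS hσ himc t ht h1 hlt

lemma imc_of_lt (hS : S.toES.IsES) (hσ : IsPreStrategy S A σ) {s s' : S.Evt}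
    (himc : S.toES.imc s s') (hlt : A.toES.lt (σ s) (σ s')) :
    A.toES.imc (σ s) (σ s') := by
  refine ⟨hlt, ?_⟩
  intro b hsb hbs'
  have hxconf : S.toES.Config {t | S.toES.le t s'} := downset_config hS s'
  have hiconf : A.toES.Config (σ '' {t | S.toES.le t s'}) := hσ.1.1 _ hxconf
  have hb : b ∈ σ '' {t | S.toES.le t s'} :=
    hiconf.2.2 (σ s') (Set.mem_image_of_mem σ (hS.1 s')) b hbs'
  obtain ⟨t, ht, rfl⟩ := hb
  by_cases h1 : t = s'
  · exact Or.inr (h1 ▸ rfl)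
  · by_cases h2 : σ s = σ t
    · exact Or.inl h2.symm
    · exact absurd ⟨hsb, h2⟩ (maxclaim hS hσ himc t ht h1)

lemma court_pos (hS : S.toES.IsES) (hA : A.toES.IsES) (hσ : IsPreStrategy S A σ)
    (hpf : DiscFibOn S.toES A.toES σ (posLE S.pol) (posLE A.pol))
    {s s' : S.Evt} (himc : S.toES.imc s s') (hpols : S.pol s = true) :
    A.toES.imc (σ s) (σ s') := by
  have hxconf : S.toES.Config {t | S.toES.le t s'} := downset_config hS s'
  have hsx : s ∈ {t | S.toES.le t s'} := himc.1.1
  have hs'x : s' ∈ {t | S.toES.le t s'} := hS.1 s'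
  have hne' : σ s ≠ σ s' := fun h => himc.1.2 (hσ.1.2 _ hxconf hsx hs'x h)
  apply imc_of_lt hS hσ himc
  by_contra hnlt
  have hyconf := hat_config hS hA hσ himc hnlt
  have hpos : posLE A.pol (σ '' {t | S.toES.le t s'} \ {σ s}) (σ '' {t | S.toES.le t s'}) := by
    refine ⟨Set.diff_subset, ?_⟩
    intro b hb hbn
    have : b = σ s := by
      by_contra h
      exact hbn ⟨hb, h⟩
    rw [this, hσ.2]; exact hpols
  obtain ⟨x₀, ⟨hx₀conf, ⟨hx₀sub, -⟩, hx₀img⟩, -⟩ :=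
    hpf.2 _ hxconf _ hyconf hpos
  have hs'y : σ s' ∈ σ '' x₀ := by
    rw [hx₀img]
    exact ⟨Set.mem_image_of_mem σ hs'x, fun h => hne' (Set.mem_singleton_iff.mp h).symm⟩
  obtain ⟨u, hu, hue⟩ := hs'y
  have hu' : u = s' := hσ.1.2 _ hxconf (hx₀sub hu) hs'x hue
  have hsx₀ : s ∈ x₀ := hx₀conf.2.2 u hu s (hu' ▸ himc.1.1)
  have : σ s ∈ σ '' x₀ := Set.mem_image_of_mem σ hsx₀
  rw [hx₀img] at this
  exact this.2 rfl

lemma court_neg (hS : S.toES.IsES) (hA : A.toES.IsES) (hσ : IsPreStrategy S A σ)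
    (hr : Receptive S A σ)
    (hnf : DiscFibOn S.toES A.toES σ (negLE S.pol) (negLE A.pol))
    {s s' : S.Evt} (himc : S.toES.imc s s') (hpols : S.pol s = false)
    (hpols' : S.pol s' = false) :
    A.toES.imc (σ s) (σ s') := by
  set xh : Set S.Evt := {t | S.toES.le t s'} with hxh
  have hxconf : S.toES.Config xh := downset_config hS s'
  have hsx : s ∈ xh := himc.1.1
  have hs'x : s' ∈ xh := hS.1 s'
  have hne : s ≠ s' := himc.1.2
  have hne' : σ s ≠ σ s' := fun h => hne (hσ.1.2 _ hxconf hsx hs'x h)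
  set w : Set S.Evt := {t | S.toES.le t s' ∧ t ≠ s' ∧ t ≠ s} with hw
  have hwconf : S.toES.Config w := v_config hS himc
  have hwsub : w ⊆ xh := fun u hu => hu.1
  have hsw : s ∉ w := fun h => h.2.2 rfl
  have hs'w : s' ∉ w := fun h => h.2.1 rfl
  have hxheq : xh = insert s (insert s' w) := by
    ext t
    constructor
    · intro ht
      by_cases h1 : t = s
      · exact Or.inl h1
      · by_cases h2 : t = s'
        · exact Or.inr (Or.inl h2)
        · exact Or.inr (Or.inr ⟨ht, h2, h1⟩)
    · rintro (rfl | rfl | ht)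
      exacts [hsx, hs'x, ht.1]
  have hs'nw : σ s' ∉ σ '' w := by
    rintro ⟨t, ht, he⟩
    exact hs'w ((hσ.1.2 _ hxconf (hwsub ht) hs'x he) ▸ ht)
  have hsnw : σ s ∉ σ '' w := by
    rintro ⟨t, ht, he⟩
    exact hsw ((hσ.1.2 _ hxconf (hwsub ht) hsx he) ▸ ht)
  have hsn : σ s ∉ insert (σ s') (σ '' w) := by
    rintro (h | h)
    · exact hne' h
    · exact hsnw h
  have himgxh : σ '' xh = insert (σ s) (insert (σ s') (σ '' w)) := by
    rw [hxheq, Set.image_insert_eq, Set.image_insert_eq]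
  apply imc_of_lt hS hσ himc
  by_contra hnlt
  -- Step 1: insert (σ s') (σ '' w) is a configuration
  have hstep1 : A.toES.Config (insert (σ s') (σ '' w)) := by
    have h1 := hat_config hS hA hσ himc hnlt
    have he1 : σ '' xh \ {σ s} = insert (σ s') (σ '' w) := by
      rw [himgxh, Set.insert_diff_self_of_notMem hsn]
    rwa [he1] at h1
  have hpolss' : A.pol (σ s') = false := by rw [hσ.2]; exact hpols'
  have hpolss : A.pol (σ s) = false := by rw [hσ.2]; exact hpols
  obtain ⟨s₁, ⟨hs₁w, hs₁conf, hs₁a⟩, -⟩ := hr w hwconf (σ s') hpolss' hs'nw hstep1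
  -- Step 2: receptivity at insert s₁ w
  have himgw1 : σ '' (insert s₁ w) = insert (σ s') (σ '' w) := by
    rw [Set.image_insert_eq, hs₁a]
  have hsnw1 : σ s ∉ σ '' (insert s₁ w) := by rw [himgw1]; exact hsn
  have hstep2 : A.toES.Config (insert (σ s) (σ '' (insert s₁ w))) := by
    rw [himgw1, ← himgxh]
    exact hσ.1.1 _ hxconf
  obtain ⟨s₂, ⟨hs₂w, hs₂conf, hs₂a⟩, -⟩ :=
    hr (insert s₁ w) hs₁conf (σ s) hpolss hsnw1 hstep2
  -- the two lifts over w with image σ '' xh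
  have hyconf : A.toES.Config (σ '' xh) := hσ.1.1 _ hxconf
  have hynegLE : negLE A.pol (σ '' xh) (σ '' w) := by
    refine ⟨Set.image_mono hwsub, ?_⟩
    intro b hb hbn
    rw [himgxh] at hb
    rcases hb with rfl | rfl | hb
    · exact hpolss
    · exact hpolss'
    · exact absurd hb hbn
  obtain ⟨xu, -, huniq⟩ := hnf.2 w hwconf _ hyconf hynegLE
  have hlift1 : xh = xu := by
    apply huniq
    refine ⟨hxconf, ⟨?_, ?_⟩, rfl⟩
    · exact hwsub
    · intro t ht htn
      rw [hxheq] at ht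
      rcases ht with rfl | rfl | ht
      · exact hpols
      · exact hpols'
      · exact absurd ht htn
  have hpols₁ : S.pol s₁ = false := by rw [← hσ.2, hs₁a]; exact hpolss'
  have hpols₂ : S.pol s₂ = false := by rw [← hσ.2, hs₂a]; exact hpolss
  have hlift2 : insert s₂ (insert s₁ w) = xu := by
    apply huniq
    refine ⟨hs₂conf, ⟨?_, ?_⟩, ?_⟩
    · exact (Set.subset_insert _ _).trans (Set.subset_insert _ _)
    · rintro t (rfl | rfl | ht) htn
      · exact hpols₂
      · exact hpols₁
      · exact absurd ht htn
    · rw [Set.image_insert_eq, hs₂a, himgw1, ← himgxh]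
  have hs₁xh : s₁ ∈ xh := by
    rw [hlift1, ← hlift2]
    exact Or.inr (Or.inl rfl)
  have hs₁s' : s₁ = s' := hσ.1.2 _ hxconf hs₁xh hs'x hs₁a
  -- contradiction: insert s₁ w = insert s' w is a config but not down-closed
  have : s ∈ insert s₁ w := hs₁conf.2.2 s₁ (Set.mem_insert _ _) s (hs₁s' ▸ himc.1.1)
  rcases this with h | h
  · exact hne (h.trans hs₁s')
  · exact hsw h

lemma court_of_fibs (hS : S.toES.IsES) (hA : A.toES.IsES) (hσ : IsPreStrategy S A σ)
    (hnf : DiscFibOn S.toES A.toES σ (negLE S.pol) (negLE A.pol))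
    (hpf : DiscFibOn S.toES A.toES σ (posLE S.pol) (posLE A.pol)) :
    Courteous S A σ := by
  have hr : Receptive S A σ := recep_of_negfib hS hA hσ hnf
  intro s s' himc hne
  cases hps : S.pol s with
  | true => exact court_pos hS hA hσ hpf himc hps
  | false =>
      cases hps' : S.pol s' with
      | true => exact absurd (by rw [hps, hps']) hne
      | false => exact court_neg hS hA hσ hr hnf himc hps hps'

end AuxStrat3
namespace AuxStrat4
open AuxES AuxStrat AuxStrat2 AuxStrat3

variable {S A : ESP} {σ : S.Evt → A.Evt}

lemma polExt_refl {α : Type} (pol : α → Bool) (b : Bool) (x : Set α) :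
    polExt pol b x x := ⟨subset_rfl, fun a ha han => absurd ha han⟩

lemma negfib_of (hS : S.toES.IsES) (hA : A.toES.IsES) (hσ : IsPreStrategy S A σ)
    (hc : Courteous S A σ) (hr : Receptive S A σ) :
    DiscFibOn S.toES A.toES σ (negLE S.pol) (negLE A.pol) := by
  refine ⟨fun x x' hx hx' h => mono_neg hσ hx hx' h, ?_⟩
  intro x hx y hy ⟨hsub, hnegd⟩
  obtain ⟨x', hx'c, hx'sub, hx'neg, hx'img⟩ := neg_lift_ex hS hA hσ hr hx hy hsub hnegd
  refine ⟨x', ⟨hx'c, ⟨hx'sub, hx'neg⟩, hx'img⟩, ?_⟩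
  rintro x'' ⟨hx''c, ⟨hsub'', hneg''⟩, him''⟩
  exact Set.Subset.antisymm
    (neg_uniq_sub hS hA hσ hc hr hx hx''c hx'c hsub'' hneg'' hx'sub hx'neg
      (him''.trans hx'img.symm))
    (neg_uniq_sub hS hA hσ hc hr hx hx'c hx''c hx'sub hx'neg hsub'' hneg''
      (hx'img.trans him''.symm))

lemma posfib_of (hS : S.toES.IsES) (hA : A.toES.IsES) (hσ : IsPreStrategy S A σ)
    (hc : Courteous S A σ) :
    DiscFibOn S.toES A.toES σ (posLE S.pol) (posLE A.pol) := by
  refine ⟨fun x x' hx hx' h => mono_pos hσ hx hx' h, ?_⟩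
  intro x hx y hy h
  exact pos_lift hS hσ hc hx hy h

lemma scott_of_fibs (hS : S.toES.IsES) (hA : A.toES.IsES) (hσ : IsPreStrategy S A σ)
    (hnf : DiscFibOn S.toES A.toES σ (negLE S.pol) (negLE A.pol))
    (hpf : DiscFibOn S.toES A.toES σ (posLE S.pol) (posLE A.pol)) :
    DiscFibOn S.toES A.toES σ (scottLE S.pol) (scottLE A.pol) := by
  refine ⟨fun x x' hx hx' h => mono_scott hσ hx hx' h, ?_⟩
  rintro x hx y hy ⟨⟨hsub1, hp1⟩, ⟨hsub2, hp2⟩⟩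
  have hxic : A.toES.Config (σ '' x) := hσ.1.1 x hx
  set z : Set A.Evt := y ∩ σ '' x with hz
  have hzconf : A.toES.Config z := by
    refine config_of_subset hy Set.inter_subset_left ?_
    intro e he e' hle
    exact ⟨hy.2.2 e he.1 e' hle, hxic.2.2 e he.2 e' hle⟩
  obtain ⟨x₀, ⟨hx₀c, ⟨hx₀sub, hx₀pos⟩, hx₀img⟩, huniqP⟩ :=
    hpf.2 x hx z hzconf ⟨hsub2, hp2⟩
  have hnegy : negLE A.pol y (σ '' x₀) := by
    rw [hx₀img]
    exact ⟨hsub1, hp1⟩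
  obtain ⟨x', ⟨hx'c, ⟨hx'sub, hx'neg⟩, hx'img⟩, huniqN⟩ :=
    hnf.2 x₀ hx₀c y hy hnegy
  have hinter : x' ∩ x = x₀ := by
    apply Set.Subset.antisymm
    · rintro t ⟨ht', ht⟩
      by_contra htn
      have h1 : σ t ∉ σ '' x₀ := by
        intro hmem
        exact htn (mem_of_img hσ hx'c hx'sub ht' hmem)
      rw [hx₀img] at h1
      exact h1 ⟨hx'img ▸ Set.mem_image_of_mem σ ht', Set.mem_image_of_mem σ ht⟩
    · exact Set.subset_inter hx'sub hx₀sub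
  refine ⟨x', ⟨hx'c, ⟨⟨?_, ?_⟩, ⟨?_, ?_⟩⟩, hx'img⟩, ?_⟩
  · rw [hinter]; exact hx'sub
  · intro t ht htn
    rw [hinter] at htn
    exact hx'neg t ht htn
  · exact Set.inter_subset_right
  · intro t ht htn
    rw [hinter] at htn
    exact hx₀pos t ht htn
  · rintro x'' ⟨hx''c, ⟨⟨hE1s, hE1⟩, ⟨hE2s, hE2⟩⟩, hx''img⟩
    have hz''conf : S.toES.Config (x'' ∩ x) := by
      refine config_of_subset hx''c Set.inter_subset_left ?_
      intro e he e' hle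
      exact ⟨hx''c.2.2 e he.1 e' hle, hx.2.2 e he.2 e' hle⟩
    have hz''img : σ '' (x'' ∩ x) = z := by
      rw [img_inter hσ hx''c hx (fun t ht htx => hE1 t ht (fun hm => htx hm.2))
        (fun t ht htx => hE2 t ht (fun hm => htx hm.1)), hx''img]
    have hz''eq : x'' ∩ x = x₀ :=
      huniqP (x'' ∩ x) ⟨hz''conf, ⟨Set.inter_subset_right,
        fun t ht htn => hE2 t ht htn⟩, hz''img⟩
    apply huniqN
    refine ⟨hx''c, ⟨?_, ?_⟩, hx''img⟩
    · rw [← hz''eq]; exact Set.inter_subset_left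
    · intro t ht htn
      rw [← hz''eq] at htn
      exact hE1 t ht htn

lemma posfib_of_scott (hS : S.toES.IsES) (hA : A.toES.IsES) (hσ : IsPreStrategy S A σ)
    (hsf : DiscFibOn S.toES A.toES σ (scottLE S.pol) (scottLE A.pol)) :
    DiscFibOn S.toES A.toES σ (posLE S.pol) (posLE A.pol) := by
  refine ⟨fun x x' hx hx' h => mono_pos hσ hx hx' h, ?_⟩
  rintro x hx y hy ⟨hsub, hp⟩
  have hyint : y ∩ σ '' x = y := Set.inter_eq_self_of_subset_left hsub
  have hsc : scottLE A.pol y (σ '' x) := by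
    constructor
    · rw [hyint]; exact polExt_refl _ _ _
    · rw [hyint]; exact ⟨hsub, hp⟩
  obtain ⟨x', ⟨hx'c, ⟨⟨hsc1s, hsc1⟩, ⟨hsc2s, hsc2⟩⟩, himg⟩, huniq⟩ :=
    hsf.2 x hx y hy hsc
  have hiimg : σ '' (x' ∩ x) = σ '' x' := by
    rw [img_inter hσ hx'c hx (fun t ht htx => hsc1 t ht (fun hm => htx hm.2))
      (fun t ht htx => hsc2 t ht (fun hm => htx hm.1)), himg, hyint]
  have hx'x : x' ⊆ x := by
    intro t ht
    have : σ t ∈ σ '' (x' ∩ x) := by rw [hiimg]; exact Set.mem_image_of_mem σ ht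
    exact (mem_of_img hσ hx'c Set.inter_subset_left ht this).2
  refine ⟨x', ⟨hx'c, ⟨hx'x, fun t ht htn => hsc2 t ht (fun hm => htn hm.1)⟩, himg⟩, ?_⟩
  rintro x'' ⟨hx''c, ⟨hsub'', hp''⟩, himg''⟩
  apply huniq
  have hint'' : x'' ∩ x = x'' := Set.inter_eq_self_of_subset_left hsub''
  refine ⟨hx''c, ⟨?_, ?_⟩, himg''⟩
  · rw [hint'']; exact polExt_refl _ _ _
  · rw [hint'']; exact ⟨hsub'', hp''⟩

lemma negfib_of_scott (hS : S.toES.IsES) (hA : A.toES.IsES) (hσ : IsPreStrategy S A σ)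
    (hsf : DiscFibOn S.toES A.toES σ (scottLE S.pol) (scottLE A.pol)) :
    DiscFibOn S.toES A.toES σ (negLE S.pol) (negLE A.pol) := by
  refine ⟨fun x x' hx hx' h => mono_neg hσ hx hx' h, ?_⟩
  rintro x hx y hy ⟨hsub, hp⟩
  have hyint : y ∩ σ '' x = σ '' x := Set.inter_eq_self_of_subset_right hsub
  have hsc : scottLE A.pol y (σ '' x) := by
    constructor
    · rw [hyint]; exact ⟨hsub, hp⟩
    · rw [hyint]; exact polExt_refl _ _ _
  obtain ⟨x', ⟨hx'c, ⟨⟨hsc1s, hsc1⟩, ⟨hsc2s, hsc2⟩⟩, himg⟩, huniq⟩ :=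
    hsf.2 x hx y hy hsc
  have hiimg : σ '' (x' ∩ x) = σ '' x := by
    rw [img_inter hσ hx'c hx (fun t ht htx => hsc1 t ht (fun hm => htx hm.2))
      (fun t ht htx => hsc2 t ht (fun hm => htx hm.1)), himg, hyint]
  have hxx' : x ⊆ x' := by
    intro t ht
    have : σ t ∈ σ '' (x' ∩ x) := by rw [hiimg]; exact Set.mem_image_of_mem σ ht
    exact (mem_of_img hσ hx Set.inter_subset_right ht this).1
  refine ⟨x', ⟨hx'c, ⟨hxx', fun t ht htn => hsc1 t ht (fun hm => htn hm.2)⟩, himg⟩, ?_⟩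
  rintro x'' ⟨hx''c, ⟨hsub'', hp''⟩, himg''⟩
  apply huniq
  have hint'' : x'' ∩ x = x := Set.inter_eq_self_of_subset_right hsub''
  refine ⟨hx''c, ⟨?_, ?_⟩, himg''⟩
  · rw [hint'']; exact ⟨hsub'', hp''⟩
  · rw [hint'']; exact polExt_refl _ _ _

end AuxStrat4

/-- a pre-strategy `σ` is courteous and receptive iff it is a
discrete fibration for both `⊇⁻` and `⊆⁺`, iff it is a discrete fibration for
the Scott orders. -/
theorem courteous_receptive_iff_discrete_fibration
    (S A : ESP) (hS : S.toES.IsES) (hA : A.toES.IsES)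
    (σ : S.Evt → A.Evt) (hσ : IsPreStrategy S A σ) :
    ((Courteous S A σ ∧ Receptive S A σ) ↔
      (DiscFibOn S.toES A.toES σ (negLE S.pol) (negLE A.pol) ∧
       DiscFibOn S.toES A.toES σ (posLE S.pol) (posLE A.pol))) ∧
    ((Courteous S A σ ∧ Receptive S A σ) ↔
      DiscFibOn S.toES A.toES σ (scottLE S.pol) (scottLE A.pol)) := by

  have hnf_of : ∀ (hc : Courteous S A σ) (hr : Receptive S A σ),
      DiscFibOn S.toES A.toES σ (negLE S.pol) (negLE A.pol) :=
    fun hc hr => AuxStrat4.negfib_of hS hA hσ hc hr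
  constructor
  · constructor
    · rintro ⟨hc, hr⟩
      exact ⟨hnf_of hc hr, AuxStrat4.posfib_of hS hA hσ hc⟩
    · rintro ⟨hnf, hpf⟩
      exact ⟨AuxStrat3.court_of_fibs hS hA hσ hnf hpf,
        AuxStrat2.recep_of_negfib hS hA hσ hnf⟩
  · constructor
    · rintro ⟨hc, hr⟩
      exact AuxStrat4.scott_of_fibs hS hA hσ (hnf_of hc hr)
        (AuxStrat4.posfib_of hS hA hσ hc)
    · intro hsf
      have hnf := AuxStrat4.negfib_of_scott hS hA hσ hsf
      have hpf := AuxStrat4.posfib_of_scott hS hA hσ hsf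
      exact ⟨AuxStrat3.court_of_fibs hS hA hσ hnf hpf,
        AuxStrat2.recep_of_negfib hS hA hσ hnf⟩
end

section
/- Let σ : S → A be a receptive and courteous pre-strategy, let x¹, x² ∈ C(CC_A ⊙ S), and let (y¹_S, y¹_A) and (y²_S, y²_A) be the representations of their minimal witnesses (so [xⁱ] ∈ C(CC_A ⊛ S) corresponds to yⁱ_S ∈ C(S), yⁱ_A ∈ C(A) with σ yⁱ_S ∥ yⁱ_A ∈ C(CC_A)). Then: x¹ extends to x² by a single positive event iff y¹_S ⊆ y²_S and y¹_A extends to y²_A by a single positive event; and x¹ extends to x² by a single negative event iff y¹_S = y²_S and y¹_A extends to y²_A by a single negative event. -/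
/-- The generating relation of copycat causality on `A^⊥ ∥ A`:
the causality of `A^⊥ ∥ A` together with the links from each negative
occurrence to the corresponding positive occurrence on the other side. -/
def ccGen (A : ESP) : (A.Evt ⊕ A.Evt) → (A.Evt ⊕ A.Evt) → Prop :=
  fun p q => (A.dual.par A).le p q ∨
    (∃ a, A.pol a = true ∧ p = Sum.inl a ∧ q = Sum.inr a) ∨
    (∃ a, A.pol a = false ∧ p = Sum.inr a ∧ q = Sum.inl a)

/-- The copycat structure `CC_A` on the game `A`. -/
def CC (A : ESP) : ESP where
  Evt := A.Evt ⊕ A.Evt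
  le := Relation.ReflTransGen (ccGen A)
  Con := {X | {e | ∃ e' ∈ X, Relation.ReflTransGen (ccGen A) e e'} ∈ (A.dual.par A).Con}
  pol := (A.dual.par A).pol
/-- The relation `◁` generating the order on the graph `G` of a bijection:
`p ◁ q` when both are in `G` and `p.1 <_S q.1` or `p.2 <_T q.2`. -/
def gRel (S T : ES) (G : Set (S.Evt × T.Evt)) :
    (S.Evt × T.Evt) → (S.Evt × T.Evt) → Prop :=
  fun p q => p ∈ G ∧ q ∈ G ∧ (S.lt p.1 q.1 ∨ T.lt p.2 q.2)

/-- The graph `G` is secured: the reflexive-transitive closure of `◁` on `G`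
is antisymmetric (hence a partial order). -/
def SecuredOn (S T : ES) (G : Set (S.Evt × T.Evt)) : Prop :=
  ∀ p q, Relation.ReflTransGen (gRel S T G) p q →
    Relation.ReflTransGen (gRel S T G) q p → p = q

/-- `G` is (the graph of) a secured bijection `φ : x ≃ σ x = τ y ≃ y` between
configurations `x ∈ C(S)` and `y ∈ C(T)`, an element of `SB(σ, τ)`. -/
def IsSecBij (S T A : ES) (σ : S.Evt → A.Evt) (τ : T.Evt → A.Evt)
    (G : Set (S.Evt × T.Evt)) : Prop :=
  S.Config (Prod.fst '' G) ∧ T.Config (Prod.snd '' G) ∧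
  (∀ p ∈ G, σ p.1 = τ p.2) ∧
  (∀ s ∈ Prod.fst '' G, ∀ t ∈ Prod.snd '' G, σ s = τ t → (s, t) ∈ G) ∧
  σ '' (Prod.fst '' G) = τ '' (Prod.snd '' G) ∧
  SecuredOn S T G

/-- `G` has a top (greatest) element for the induced order. -/
def IsPrime (S T : ES) (G : Set (S.Evt × T.Evt)) : Prop :=
  ∃ p ∈ G, ∀ q ∈ G, Relation.ReflTransGen (gRel S T G) q p

/-- The interaction `S ∧ T` of `σ : S → A` and `τ : T → A`: events are the
prime secured bijections, causality is inclusion of graphs, and a finite set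
of events is consistent when the union of their graphs is a secured bijection. -/
def Interaction (S T A : ES) (σ : S.Evt → A.Evt) (τ : T.Evt → A.Evt) : ES where
  Evt := {G : Set (S.Evt × T.Evt) // IsSecBij S T A σ τ G ∧ IsPrime S T G}
  le := fun G G' => G.val ⊆ G'.val
  Con := {X | X.Finite ∧ IsSecBij S T A σ τ (⋃ G ∈ X, G.val)}
/-- The interaction `CC_A ⊛ S`: the pullback of `σ ∥ id_A : S ∥ A → A ∥ A`
and `ccc_A = id : CC_A → A ∥ A` (polarities ignored). -/
def ccInterES (A S : ESP) (σ : S.Evt → A.Evt) : ES :=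
  Interaction (S.toES.par A.toES) (CC A).toES (A.toES.par A.toES)
    (Sum.map σ id) id

/-- The graph of the bijection `x ∥ y ≃ σ x ∥ y` determined by a pair of
configurations `(x, y) ∈ C(S) × C(A)` (the secured bijection `Ψ⁻¹(x, y)`). -/
def ccGraph (A S : ESP) (σ : S.Evt → A.Evt) (xS : Set S.Evt) (xA : Set A.Evt) :
    Set ((S.Evt ⊕ A.Evt) × (A.Evt ⊕ A.Evt)) :=
  {p | p.1 ∈ Sum.inl '' xS ∪ Sum.inr '' xA ∧ p.2 = Sum.map σ id p.1}

/-- All maximal events of the graph `G` (for its induced order) are visible,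
i.e. project to the right-hand copy of `A`. -/
def MaxVis (A S : ESP) (σ : S.Evt → A.Evt)
    (G : Set ((S.Evt ⊕ A.Evt) × (A.Evt ⊕ A.Evt))) : Prop :=
  ∀ p ∈ G, (∀ q ∈ G, Relation.ReflTransGen
      (gRel (S.toES.par A.toES) (CC A).toES G) p q → q = p) →
    ∃ a : A.Evt, p.1 = Sum.inr a
/-- Visibility of an event of `CC_A ⊛ S`: its top synchronised pair projects
to the right-hand copy of `A`. -/
def ccVis (A S : ESP) (σ : S.Evt → A.Evt) (G : (ccInterES A S σ).Evt) : Prop :=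
  ∃ a : A.Evt,
    ((Sum.inr a, Sum.inr a) : (S.Evt ⊕ A.Evt) × (A.Evt ⊕ A.Evt)) ∈ G.val ∧
    ∀ q ∈ G.val, Relation.ReflTransGen
      (gRel (S.toES.par A.toES) (CC A).toES G.val) q (Sum.inr a, Sum.inr a)

/-- The composition `CC_A ⊙ S`: the projection of `CC_A ⊛ S` to its visible
events. -/
def ccCompES (A S : ESP) (σ : S.Evt → A.Evt) : ES :=
  (ccInterES A S σ).proj {G | ccVis A S σ G}

/-- The labelling map `ccc_A ⊙ σ : CC_A ⊙ S → A` of the composition. -/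
noncomputable def ccCompLabel (A S : ESP) (σ : S.Evt → A.Evt)
    (G : (ccCompES A S σ).Evt) : A.Evt :=
  Exists.choose (G.prop : ccVis A S σ G.val)

/-- The composition `CC_A ⊙ S` as an esp, with polarities inherited from the
right-hand copy of `A`. -/
noncomputable def ccCompESP (A S : ESP) (σ : S.Evt → A.Evt) : ESP where
  toES := ccCompES A S σ
  pol := fun G => A.pol (ccCompLabel A S σ G)

/-- The union of the graphs of the events of the minimal witness
`[z] ∈ C(CC_A ⊛ S)` of a configuration `z ∈ C(CC_A ⊙ S)`. -/
def ccWitUnion (A S : ESP) (σ : S.Evt → A.Evt)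
    (z : Set (ccCompES A S σ).Evt) :
    Set ((S.Evt ⊕ A.Evt) × (A.Evt ⊕ A.Evt)) :=
  ⋃ H ∈ {H : (ccInterES A S σ).Evt | ∃ G ∈ z, H.val ⊆ G.val.val}, H.val

/-- The `C(S)` component `y_S` of the representation via `Ψ` of the minimal
witness of `z ∈ C(CC_A ⊙ S)`. -/
def ccWitS (A S : ESP) (σ : S.Evt → A.Evt)
    (z : Set (ccCompES A S σ).Evt) : Set S.Evt :=
  Sum.inl ⁻¹' (Prod.fst '' ccWitUnion A S σ z)

/-- The `C(A)` component `y_A` of the representation via `Ψ` of the minimal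
witness of `z ∈ C(CC_A ⊙ S)`. -/
def ccWitA (A S : ESP) (σ : S.Evt → A.Evt)
    (z : Set (ccCompES A S σ).Evt) : Set A.Evt :=
  Sum.inr ⁻¹' (Prod.fst '' ccWitUnion A S σ z)

namespace CCAux

open Relation

variable {A S : ESP} {σ : S.Evt → A.Evt}

/-- The pair type of the interaction. -/
abbrev PT (A S : ESP) : Type := (S.Evt ⊕ A.Evt) × (A.Evt ⊕ A.Evt)

abbrev SA (A S : ESP) : ES := S.toES.par A.toES

abbrev sm (σ : S.Evt → A.Evt) : (S.Evt ⊕ A.Evt) → (A.Evt ⊕ A.Evt) := Sum.map σ id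

abbrev gr (A S : ESP) (G : Set (PT A S)) : PT A S → PT A S → Prop :=
  gRel (SA A S) (CC A).toES G

abbrev Bij (A S : ESP) (σ : S.Evt → A.Evt) (G : Set (PT A S)) : Prop :=
  IsSecBij (SA A S) (CC A).toES (A.toES.par A.toES) (Sum.map σ id) id G

lemma Bij.cfg1 {G} (h : Bij A S σ G) : (SA A S).Config (Prod.fst '' G) := h.1
lemma Bij.cfg2 {G} (h : Bij A S σ G) : (CC A).toES.Config (Prod.snd '' G) := h.2.1
lemma Bij.sync {G} (h : Bij A S σ G) {p : PT A S} (hp : p ∈ G) : p.2 = sm σ p.1 :=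
  (h.2.2.1 p hp).symm
lemma Bij.secured {G} (h : Bij A S σ G) : SecuredOn (SA A S) (CC A).toES G :=
  h.2.2.2.2.2

lemma config_preimage_inl {E F : ES} {x : Set (E.par F).Evt} (hx : (E.par F).Config x) :
    E.Config (Sum.inl ⁻¹' x) := by
  obtain ⟨hfin, hcon, hdc⟩ := hx
  refine ⟨hfin.preimage Sum.inl_injective.injOn, ?_, ?_⟩
  · intro Y hY hYfin
    have h1 : (Sum.inl '' Y : Set (E.par F).Evt) ⊆ x := by
      rintro _ ⟨a, ha, rfl⟩; exact hY ha
    have h2 := hcon _ h1 (hYfin.image _)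
    have h3 := h2.1
    convert h3 using 1; exact (Set.preimage_image_eq Y Sum.inl_injective).symm
  · intro e he e' hle
    exact hdc (Sum.inl e) he (Sum.inl e') hle

lemma smap_injOn (hσ : IsPreStrategy S A σ) {x : Set (SA A S).Evt}
    (hx : (SA A S).Config x) : Set.InjOn (sm σ) x := by
  intro u hu v hv h
  match u, v with
  | .inl s, .inl t =>
      simp only [sm, Sum.map_inl, Sum.inl.injEq] at h
      have := hσ.1.2 _ (config_preimage_inl hx) hu hv h
      exact congrArg Sum.inl this
  | .inl s, .inr b => exact absurd h (by simp)
  | .inr b, .inl s => exact absurd h (by simp)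
  | .inr b, .inr c => simpa using h

end CCAux
namespace CCAux

variable {A S : ESP} {σ : S.Evt → A.Evt}

/-- Down-closure of `t` inside the graph `G`. -/
def dc (A S : ESP) (G : Set (PT A S)) (t : PT A S) : Set (PT A S) :=
  {q | q ∈ G ∧ Relation.ReflTransGen (gr A S G) q t}

lemma gr_mono {G G' : Set (PT A S)} (h : G ⊆ G') {p q} (hpq : gr A S G p q) :
    gr A S G' p q := ⟨h hpq.1, h hpq.2.1, hpq.2.2⟩

lemma rtg_mono {G G' : Set (PT A S)} (h : G ⊆ G') {p q}
    (hpq : Relation.ReflTransGen (gr A S G) p q) :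
    Relation.ReflTransGen (gr A S G') p q :=
  Relation.ReflTransGen.mono (fun _ _ => gr_mono h) _ _ hpq

lemma dc_sub {G : Set (PT A S)} {t} : dc A S G t ⊆ G := fun _ hq => hq.1

lemma dc_mem {G : Set (PT A S)} {t} (ht : t ∈ G) : t ∈ dc A S G t :=
  ⟨ht, Relation.ReflTransGen.refl⟩

/-- Chains to `t` restrict to the down-closure of `t`. -/
lemma rtg_dc {G : Set (PT A S)} {t} {q} (h : Relation.ReflTransGen (gr A S G) q t) :
    Relation.ReflTransGen (gr A S (dc A S G t)) q t := by
  induction h using Relation.ReflTransGen.head_induction_on with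
  | refl => exact Relation.ReflTransGen.refl
  | head hstep htail ih =>
    rename_i p c
    have hpdc : p ∈ dc A S G t := ⟨hstep.1, Relation.ReflTransGen.head hstep htail⟩
    have hcdc : c ∈ dc A S G t := ⟨hstep.2.1, htail⟩
    exact Relation.ReflTransGen.head ⟨hpdc, hcdc, hstep.2.2⟩ ih

/-- Lemma A: the down-closure of an element of a secured bijection is a secured
bijection (and a prime, with top `t`). -/
lemma dc_bij (hσ : IsPreStrategy S A σ) {G : Set (PT A S)} (hG : Bij A S σ G)
    {t} (ht : t ∈ G) : Bij A S σ (dc A S G t) := by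
  have hinj : Set.InjOn (sm σ) (Prod.fst '' G) := smap_injOn hσ hG.cfg1
  have hsub1 : Prod.fst '' dc A S G t ⊆ Prod.fst '' G := Set.image_mono dc_sub
  have hsub2 : Prod.snd '' dc A S G t ⊆ Prod.snd '' G := Set.image_mono dc_sub
  refine ⟨⟨hG.cfg1.1.subset hsub1, ?_, ?_⟩, ⟨hG.cfg2.1.subset hsub2, ?_, ?_⟩, ?_, ?_, ?_, ?_⟩
  · intro Y hY hYfin; exact hG.cfg1.2.1 Y (hY.trans hsub1) hYfin
  · -- down-closure of the first projection
    rintro e ⟨q, hq, rfl⟩ e' hle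
    by_cases heq : e' = q.1
    · exact ⟨q, hq, heq.symm⟩
    · obtain ⟨r, hrG, hr1⟩ := hG.cfg1.2.2 q.1 ⟨q, hq.1, rfl⟩ e' hle
      have hstep : gr A S G r q := ⟨hrG, hq.1, Or.inl ⟨hr1 ▸ hle, hr1 ▸ heq⟩⟩
      exact ⟨r, ⟨hrG, Relation.ReflTransGen.head hstep hq.2⟩, hr1⟩
  · intro Y hY hYfin; exact hG.cfg2.2.1 Y (hY.trans hsub2) hYfin
  · -- down-closure of the second projection
    rintro v ⟨q, hq, rfl⟩ v' hle
    by_cases heq : v' = q.2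
    · exact ⟨q, hq, heq.symm⟩
    · obtain ⟨r, hrG, hr2⟩ := hG.cfg2.2.2 q.2 ⟨q, hq.1, rfl⟩ v' hle
      have hstep : gr A S G r q := ⟨hrG, hq.1, Or.inr ⟨hr2 ▸ hle, hr2 ▸ heq⟩⟩
      exact ⟨r, ⟨hrG, Relation.ReflTransGen.head hstep hq.2⟩, hr2⟩
  · intro p hp; exact (hG.sync (dc_sub hp)).symm
  · -- the bijection property
    rintro u ⟨q, hq, rfl⟩ v ⟨r, hr, rfl⟩ huv
    have h1 : sm σ q.1 = sm σ r.1 :=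
      huv.trans (hG.sync (dc_sub hr))
    have h2 : q.1 = r.1 := hinj ⟨q, hq.1, rfl⟩ ⟨r, hr.1, rfl⟩ h1
    have : (q.1, r.2) = q := by
      refine Prod.ext rfl ?_
      exact (hG.sync (dc_sub hr)).trans (h1.symm.trans (hG.sync (dc_sub hq)).symm)
    exact this ▸ hq
  · -- equality of images
    apply Set.Subset.antisymm
    · rintro _ ⟨_, ⟨q, hq, rfl⟩, rfl⟩
      exact ⟨q.2, ⟨q, hq, rfl⟩, hG.sync (dc_sub hq)⟩
    · rintro _ ⟨_, ⟨q, hq, rfl⟩, rfl⟩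
      exact ⟨q.1, ⟨q, hq, rfl⟩, (hG.sync (dc_sub hq)).symm⟩
  · intro p q h1 h2
    exact hG.secured p q (rtg_mono dc_sub h1) (rtg_mono dc_sub h2)

lemma dc_prime {G : Set (PT A S)} {t} (ht : t ∈ G) :
    IsPrime (SA A S) (CC A).toES (dc A S G t) :=
  ⟨t, dc_mem ht, fun _ hq => rtg_dc hq.2⟩

/-- Lemma B: anything below the top of a prime `P` inside an ambient secured
bijection `W` lies in `P`. -/
lemma prime_sub (hσ : IsPreStrategy S A σ) {W P : Set (PT A S)}
    (hW : Bij A S σ W) (hP : Bij A S σ P) (hPW : P ⊆ W) {t} (htP : t ∈ P)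
    {q} (h : Relation.ReflTransGen (gr A S W) q t) : q ∈ P := by
  have hinj : Set.InjOn (sm σ) (Prod.fst '' W) := smap_injOn hσ hW.cfg1
  induction h using Relation.ReflTransGen.head_induction_on with
  | refl => exact htP
  | head hstep htail ih =>
    rename_i p m
    obtain ⟨hpW, hmW, hlt⟩ := hstep
    rcases hlt with hlt | hlt
    · obtain ⟨r, hrP, hr1⟩ := hP.cfg1.2.2 m.1 ⟨m, ih, rfl⟩ p.1 hlt.1
      have : r = p := by
        refine Prod.ext hr1 ?_
        calc r.2 = sm σ r.1 := hP.sync hrP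
          _ = sm σ p.1 := by rw [hr1]
          _ = p.2 := (hW.sync hpW).symm
      exact this ▸ hrP
    · obtain ⟨r, hrP, hr2⟩ := hP.cfg2.2.2 m.2 ⟨m, ih, rfl⟩ p.2 hlt.1
      have h1 : sm σ r.1 = sm σ p.1 :=
        (hP.sync hrP).symm.trans (hr2.trans (hW.sync hpW))
      have h2 : r.1 = p.1 := hinj ⟨r, hPW hrP, rfl⟩ ⟨p, hpW, rfl⟩ h1
      have : r = p := Prod.ext h2 hr2
      exact this ▸ hrP

/-- Two primes with the same top inside a common ambient secured bijection
are equal. -/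
lemma prime_eq (hσ : IsPreStrategy S A σ) {W P Q : Set (PT A S)}
    (hW : Bij A S σ W) (hP : Bij A S σ P) (hPW : P ⊆ W)
    (hQ : Bij A S σ Q) (hQW : Q ⊆ W) {t} (htP : t ∈ P) (htQ : t ∈ Q)
    (hdomP : ∀ q ∈ P, Relation.ReflTransGen (gr A S P) q t)
    (hdomQ : ∀ q ∈ Q, Relation.ReflTransGen (gr A S Q) q t) : P = Q := by
  apply Set.Subset.antisymm
  · intro q hq; exact prime_sub hσ hW hQ hQW htQ (rtg_mono hPW (hdomP q hq))
  · intro q hq; exact prime_sub hσ hW hP hPW htP (rtg_mono hQW (hdomQ q hq))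

end CCAux
namespace CCAux

variable {A S : ESP}

lemma ccGen_le {p q} (hA : A.toES.IsES) (h : ccGen A p q) :
    A.le (Sum.elim id id p) (Sum.elim id id q) := by
  rcases h with h | ⟨a, _, rfl, rfl⟩ | ⟨a, _, rfl, rfl⟩
  · match p, q with
    | .inl a, .inl b => exact h
    | .inr a, .inr b => exact h
    | .inl a, .inr b => exact h.elim
    | .inr a, .inl b => exact h.elim
  · exact hA.1 a
  · exact hA.1 a

/-- Projecting copycat causality to the game: `p ≤_CC q` implies
`π p ≤_A π q`. -/
lemma cc_le_proj {p q} (hA : A.toES.IsES)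
    (h : Relation.ReflTransGen (ccGen A) p q) :
    A.le (Sum.elim id id p) (Sum.elim id id q) := by
  induction h with
  | refl => exact hA.1 _
  | tail _ hstep ih =>
    exact hA.2.1 _ _ _ ih (ccGen_le hA hstep)

lemma cc_le_inl {a b : A.Evt} (h : A.le a b) :
    Relation.ReflTransGen (ccGen A) (Sum.inl a) (Sum.inl b) :=
  Relation.ReflTransGen.single (Or.inl h)

lemma cc_le_inr {a b : A.Evt} (h : A.le a b) :
    Relation.ReflTransGen (ccGen A) (Sum.inr a) (Sum.inr b) :=
  Relation.ReflTransGen.single (Or.inl h)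

lemma cc_link_pos {b : A.Evt} (hb : A.pol b = true) :
    Relation.ReflTransGen (ccGen A) (Sum.inl b) (Sum.inr b) :=
  Relation.ReflTransGen.single (Or.inr (Or.inl ⟨b, hb, rfl, rfl⟩))

/-- Crossing the copycat: a causal chain from a left event to a right event
must pass through a positive link. -/
lemma cc_le_inl_inr (hA : A.toES.IsES) {a : A.Evt} :
    ∀ p, Relation.ReflTransGen (ccGen A) p (Sum.inr a) →
    ∀ c : A.Evt, p = Sum.inl c →
    ∃ b, A.pol b = true ∧ A.le c b ∧
      Relation.ReflTransGen (ccGen A) (Sum.inr b) (Sum.inr a) := by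
  intro p h
  induction h using Relation.ReflTransGen.head_induction_on with
  | refl => intro c hc; exact absurd hc (by simp)
  | head hstep htail ih =>
    rename_i p m
    intro c hc; subst hc
    rcases hstep with hle | ⟨b, hb, he1, he2⟩ | ⟨b, hb, he1, he2⟩
    · match m, hle with
      | .inl c', hle =>
        obtain ⟨b, hb, hcb, hchain⟩ := ih c' rfl
        exact ⟨b, hb, hA.2.1 _ _ _ hle hcb, hchain⟩
      | .inr c', hle => exact hle.elim
    · obtain rfl : c = b := Sum.inl.inj he1
      exact ⟨c, hb, hA.1 c, he2 ▸ htail⟩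
    · exact absurd he1 (by simp)

end CCAux
namespace CCAux

variable {A S : ESP} {σ : S.Evt → A.Evt}

/-- The union of graphs of events of a set of composition events. -/
def WU (A S : ESP) (σ : S.Evt → A.Evt) (x : Set (ccCompES A S σ).Evt) :
    Set (PT A S) :=
  ⋃ e ∈ x, (e : (ccCompES A S σ).Evt).val.val

lemma witUnion_eq (x : Set (ccCompES A S σ).Evt) :
    ccWitUnion A S σ x = WU A S σ x := by
  apply Set.Subset.antisymm
  · intro p hp
    unfold ccWitUnion at hp
    obtain ⟨H, ⟨G, hG, hsub⟩, hpH⟩ := Set.mem_iUnion₂.1 hp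
    exact Set.mem_biUnion hG (hsub hpH)
  · intro p hp
    unfold WU at hp
    obtain ⟨G, hG, hp⟩ := Set.mem_iUnion₂.1 hp
    unfold ccWitUnion
    exact Set.mem_iUnion₂.2 ⟨G.val, ⟨G, hG, subset_rfl⟩, hp⟩

lemma graph_sub_WU {x : Set (ccCompES A S σ).Evt} {e} (he : e ∈ x) :
    (e : (ccCompES A S σ).Evt).val.val ⊆ WU A S σ x :=
  fun _ hp => Set.mem_biUnion he hp

/-- The union of the graphs of a configuration is a secured bijection. -/
lemma config_WU {x : Set (ccCompES A S σ).Evt}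
    (hx : (ccCompES A S σ).Config x) : Bij A S σ (WU A S σ x) := by
  have hcon := hx.2.1 x subset_rfl hx.1
  have h2 : (Subtype.val '' x : Set (ccInterES A S σ).Evt) ∈ (ccInterES A S σ).Con := hcon
  have h3 := h2.2
  have : (⋃ G ∈ (Subtype.val '' x : Set (ccInterES A S σ).Evt), G.val) = WU A S σ x := by
    apply Set.Subset.antisymm
    · intro p hp
      simp only [Set.mem_iUnion, Set.mem_image] at hp
      obtain ⟨G, ⟨e, he, rfl⟩, hp⟩ := hp
      exact Set.mem_biUnion he hp
    · intro p hp
      unfold WU at hp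
      obtain ⟨e, he, hp⟩ := Set.mem_iUnion₂.1 hp
      exact Set.mem_iUnion₂.2 ⟨e.val, ⟨e, he, rfl⟩, hp⟩
  exact this ▸ h3

lemma witS_iff {x : Set (ccCompES A S σ).Evt} (hx : (ccCompES A S σ).Config x)
    {s : S.Evt} :
    s ∈ ccWitS A S σ x ↔ (Sum.inl s, Sum.inl (σ s)) ∈ WU A S σ x := by
  constructor
  · intro h
    have h1 : Sum.inl s ∈ Prod.fst '' ccWitUnion A S σ x := h
    rw [witUnion_eq] at h1
    obtain ⟨p, hp, hp1⟩ := h1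
    have h2 := (config_WU hx).sync hp
    have : p = (Sum.inl s, Sum.inl (σ s)) := by
      refine Prod.ext hp1 ?_
      rw [h2, hp1]; rfl
    exact this ▸ hp
  · intro h
    show Sum.inl s ∈ Prod.fst '' ccWitUnion A S σ x
    rw [witUnion_eq]
    exact ⟨_, h, rfl⟩

lemma witA_iff {x : Set (ccCompES A S σ).Evt} (hx : (ccCompES A S σ).Config x)
    {b : A.Evt} :
    b ∈ ccWitA A S σ x ↔ (Sum.inr b, Sum.inr b) ∈ WU A S σ x := by
  constructor
  · intro h
    have h1 : Sum.inr b ∈ Prod.fst '' ccWitUnion A S σ x := h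
    rw [witUnion_eq] at h1
    obtain ⟨p, hp, hp1⟩ := h1
    have h2 := (config_WU hx).sync hp
    have : p = (Sum.inr b, Sum.inr b) := by
      refine Prod.ext hp1 ?_
      rw [h2, hp1]; rfl
    exact this ▸ hp
  · intro h
    show Sum.inr b ∈ Prod.fst '' ccWitUnion A S σ x
    rw [witUnion_eq]
    exact ⟨_, h, rfl⟩

/-- Monotonicity of witness unions with respect to the witness components. -/
lemma WU_mono {x1 x2 : Set (ccCompES A S σ).Evt}
    (h1 : (ccCompES A S σ).Config x1) (h2 : (ccCompES A S σ).Config x2)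
    (hS : ccWitS A S σ x1 ⊆ ccWitS A S σ x2)
    (hA : ccWitA A S σ x1 ⊆ ccWitA A S σ x2) :
    WU A S σ x1 ⊆ WU A S σ x2 := by
  intro p hp
  have hsync := (config_WU h1).sync hp
  match hu : p.1 with
  | .inl s =>
    have hs : s ∈ ccWitS A S σ x1 := by
      rw [witS_iff h1]
      have : p = (Sum.inl s, Sum.inl (σ s)) := by
        refine Prod.ext hu ?_
        rw [hsync, hu]; rfl
      exact this ▸ hp
    have := (witS_iff h2).1 (hS hs)
    have hpe : p = (Sum.inl s, Sum.inl (σ s)) := by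
      refine Prod.ext hu ?_
      rw [hsync, hu]; rfl
    rw [hpe]; exact this
  | .inr b =>
    have hb : b ∈ ccWitA A S σ x1 := by
      rw [witA_iff h1]
      have : p = (Sum.inr b, Sum.inr b) := by
        refine Prod.ext hu ?_
        rw [hsync, hu]; rfl
      exact this ▸ hp
    have := (witA_iff h2).1 (hA hb)
    have hpe : p = (Sum.inr b, Sum.inr b) := by
      refine Prod.ext hu ?_
      rw [hsync, hu]; rfl
    rw [hpe]; exact this

end CCAux
namespace CCAux

variable {A S : ESP} {σ : S.Evt → A.Evt}

/-- `a` is the top (visible) event of the prime `e`. -/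
def IsTop (e : (ccCompES A S σ).Evt) (a : A.Evt) : Prop :=
  ((Sum.inr a, Sum.inr a) : PT A S) ∈ (e.val.val : Set (PT A S)) ∧
  ∀ q ∈ (e.val.val : Set (PT A S)),
    Relation.ReflTransGen (gr A S e.val.val) q (Sum.inr a, Sum.inr a)

lemma exists_top (e : (ccCompES A S σ).Evt) : ∃ a, IsTop e a := by
  obtain ⟨a, h1, h2⟩ := (e.prop : ccVis A S σ e.val)
  exact ⟨a, h1, h2⟩

lemma event_bij (e : (ccCompES A S σ).Evt) : Bij A S σ e.val.val :=
  e.val.prop.1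

lemma event_secured (e : (ccCompES A S σ).Evt) :
    SecuredOn (SA A S) (CC A).toES e.val.val :=
  (event_bij e).secured

lemma top_unique {e : (ccCompES A S σ).Evt} {a b} (ha : IsTop e a)
    (hb : IsTop e b) : a = b := by
  have h := event_secured e _ _ (hb.2 _ ha.1) (ha.2 _ hb.1)
  exact Sum.inr.inj (congrArg Prod.fst h)

lemma label_eq {e : (ccCompES A S σ).Evt} {a} (h : IsTop e a) :
    ccCompLabel A S σ e = a := by
  have hspec := Exists.choose_spec (e.prop : ccVis A S σ e.val)
  exact top_unique ⟨hspec.1, hspec.2⟩ h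

lemma pol_eq {e : (ccCompES A S σ).Evt} {a} (h : IsTop e a) :
    (ccCompESP A S σ).pol e = A.pol a := by
  show A.pol (ccCompLabel A S σ e) = A.pol a
  rw [label_eq h]

/-- Every pair `(inr b, inr b)` in the witness union of a configuration is the
top of an event of the configuration. -/
lemma pair_event (hσ : IsPreStrategy S A σ) {x : Set (ccCompES A S σ).Evt}
    (hx : (ccCompES A S σ).Config x) {b}
    (hb : ((Sum.inr b, Sum.inr b) : PT A S) ∈ WU A S σ x) :
    ∃ e ∈ x, IsTop e b := by
  obtain ⟨G, hGx, hpG⟩ : ∃ G ∈ x,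
      ((Sum.inr b, Sum.inr b) : PT A S) ∈ (G : (ccCompES A S σ).Evt).val.val := by
    exact let ⟨G, hG, hp⟩ := Set.mem_iUnion₂.1 hb; ⟨G, hG, hp⟩
  have hGbij : Bij A S σ (G : (ccCompES A S σ).Evt).val.val := event_bij G
  have hDbij : Bij A S σ (dc A S G.val.val (Sum.inr b, Sum.inr b)) :=
    dc_bij hσ hGbij hpG
  have hDprime : IsPrime (SA A S) (CC A).toES
      (dc A S G.val.val (Sum.inr b, Sum.inr b)) := dc_prime hpG
  have hvisD : ccVis A S σ
      (⟨dc A S G.val.val (Sum.inr b, Sum.inr b), hDbij, hDprime⟩ :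
        (ccInterES A S σ).Evt) :=
    ⟨b, dc_mem hpG, fun q hq => rtg_dc hq.2⟩
  refine ⟨⟨⟨dc A S G.val.val (Sum.inr b, Sum.inr b), hDbij, hDprime⟩, hvisD⟩,
    ?_, dc_mem hpG, fun q hq => rtg_dc hq.2⟩
  exact hx.2.2 G hGx _ (dc_sub : dc A S G.val.val (Sum.inr b, Sum.inr b) ⊆ _)

/-- Two events of the composition with the same top contained in a common
secured bijection are equal. -/
lemma event_eq (hσ : IsPreStrategy S A σ) {W' : Set (PT A S)}
    (hW : Bij A S σ W') {e f : (ccCompES A S σ).Evt} {b}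
    (he : IsTop e b) (hf : IsTop f b)
    (heW : (e.val.val : Set (PT A S)) ⊆ W')
    (hfW : (f.val.val : Set (PT A S)) ⊆ W') : e = f := by
  have h := prime_eq hσ hW (event_bij e) heW (event_bij f) hfW he.1 hf.1 he.2 hf.2
  exact Subtype.ext (Subtype.ext h)

/-- Membership of a configuration is characterised by inclusion of graphs in
the witness union. -/
lemma mem_of_sub (hσ : IsPreStrategy S A σ) {x : Set (ccCompES A S σ).Evt}
    (hx : (ccCompES A S σ).Config x) {e : (ccCompES A S σ).Evt}
    (h : (e.val.val : Set (PT A S)) ⊆ WU A S σ x) : e ∈ x := by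
  obtain ⟨a, htop⟩ := exists_top e
  obtain ⟨f, hfx, hftop⟩ := pair_event hσ hx (h htop.1)
  exact (event_eq hσ (config_WU hx) htop hftop h (graph_sub_WU hfx)) ▸ hfx

end CCAux
namespace CCAux

variable {A S : ESP} {σ : S.Evt → A.Evt}

lemma WU_insert (e : (ccCompES A S σ).Evt) (x : Set (ccCompES A S σ).Evt) :
    WU A S σ (insert e x) = (e.val.val : Set (PT A S)) ∪ WU A S σ x :=
  Set.biUnion_insert e x _

lemma WU_mono_sub {x1 x2 : Set (ccCompES A S σ).Evt} (h : x1 ⊆ x2) :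
    WU A S σ x1 ⊆ WU A S σ x2 :=
  Set.biUnion_subset_biUnion_left h

/-- Forward direction, common part. -/
lemma forward (hσ : IsPreStrategy S A σ) {x1 x2 : Set (ccCompES A S σ).Evt}
    {e : (ccCompES A S σ).Evt}
    (h1 : (ccCompES A S σ).Config x1) (h2 : (ccCompES A S σ).Config x2)
    (he1 : e ∉ x1) (he2 : x2 = insert e x1) {a} (hta : IsTop e a) :
    ccWitS A S σ x1 ⊆ ccWitS A S σ x2 ∧ a ∉ ccWitA A S σ x1 ∧
    ccWitA A S σ x2 = insert a (ccWitA A S σ x1) := by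
  have hx12 : x1 ⊆ x2 := he2 ▸ Set.subset_insert e x1
  have hW12 : WU A S σ x1 ⊆ WU A S σ x2 := WU_mono_sub hx12
  have hex2 : e ∈ x2 := he2 ▸ Set.mem_insert e x1
  refine ⟨?_, ?_, ?_⟩
  · intro s hs
    exact (witS_iff h2).2 (hW12 ((witS_iff h1).1 hs))
  · intro h
    obtain ⟨f, hfx, hftop⟩ := pair_event hσ h1 ((witA_iff h1).1 h)
    exact he1 ((event_eq hσ (config_WU h2) hta hftop (graph_sub_WU hex2)
      (graph_sub_WU (hx12 hfx))) ▸ hfx)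
  · apply Set.Subset.antisymm
    · intro b hb
      have hbW2 : ((Sum.inr b, Sum.inr b) : PT A S) ∈ WU A S σ x2 :=
        (witA_iff h2).1 hb
      by_cases hba : b = a
      · rw [hba]; exact Set.mem_insert _ _
      · refine Set.mem_insert_of_mem a ?_
        obtain ⟨f, hfx2, hftop⟩ := pair_event hσ h2 hbW2
        have hfe : f ≠ e := by
          intro h; exact hba (top_unique (h ▸ hftop) hta)
        have hfx1 : f ∈ x1 := by
          have := he2 ▸ hfx2
          rcases this with h | h
          · exact absurd h hfe
          · exact h
        exact (witA_iff h1).2 (graph_sub_WU hfx1 hftop.1)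
    · intro b hb
      rcases hb with rfl | hb
      · exact (witA_iff h2).2 (graph_sub_WU hex2 hta.1)
      · exact (witA_iff h2).2 (hW12 ((witA_iff h1).1 hb))

/-- Forward direction, negative part: a negative extension does not change the
`S`-component of the witness. -/
lemma forward_neg (hσ : IsPreStrategy S A σ) (hA : A.toES.IsES)
    {x1 x2 : Set (ccCompES A S σ).Evt} {e : (ccCompES A S σ).Evt}
    (h1 : (ccCompES A S σ).Config x1) (h2 : (ccCompES A S σ).Config x2)
    (he2 : x2 = insert e x1) {a} (hta : IsTop e a)
    (ha2 : ccWitA A S σ x2 = insert a (ccWitA A S σ x1))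
    (hpola : A.pol a = false) :
    ccWitS A S σ x2 ⊆ ccWitS A S σ x1 := by
  have hex2 : e ∈ x2 := he2 ▸ Set.mem_insert e x1
  have hW2 : Bij A S σ (WU A S σ x2) := config_WU h2
  have hx12 : x1 ⊆ x2 := he2 ▸ Set.subset_insert e x1
  have hW12 : WU A S σ x1 ⊆ WU A S σ x2 := WU_mono_sub hx12
  -- key claim: anything in e's graph other than the top lies in `WU x1`
  have key : ∀ q ∈ (e.val.val : Set (PT A S)),
      q ≠ ((Sum.inr a, Sum.inr a) : PT A S) → q ∈ WU A S σ x1 := by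
    intro q hq hqt
    have hchain : Relation.ReflTransGen (gr A S (WU A S σ x2)) q
        (Sum.inr a, Sum.inr a) :=
      rtg_mono (graph_sub_WU hex2) (hta.2 q hq)
    rcases Relation.ReflTransGen.cases_tail hchain with h | ⟨m, hqm, hm⟩
    · exact absurd h.symm hqt
    · -- analyse the last step
      obtain ⟨hmW, htW, hlt⟩ := hm
      have hsync : m.2 = sm σ m.1 := hW2.sync hmW
      -- in both cases we find `f ∈ x1` whose top dominates `q` in `WU x2`
      suffices hsuff : ∃ f ∈ x1, ∃ c, IsTop f c ∧
          Relation.ReflTransGen (gr A S (WU A S σ x2)) q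
            (Sum.inr c, Sum.inr c) by
        obtain ⟨f, hfx1, c, hftop, hchain'⟩ := hsuff
        have : q ∈ (f.val.val : Set (PT A S)) :=
          prime_sub hσ hW2 (event_bij f)
            ((graph_sub_WU hfx1).trans hW12) hftop.1 hchain'
        exact graph_sub_WU hfx1 this
      match hu : m.1 with
      | .inr c =>
        have hme : m = ((Sum.inr c, Sum.inr c) : PT A S) := by
          refine Prod.ext hu ?_
          rw [hsync, hu]; rfl
        have hca : c ≠ a := by
          rcases hlt with hlt | hlt
          · have := hlt.2; rw [hu] at this
            intro h; exact this (congrArg Sum.inr h)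
          · have := hlt.2; rw [hme] at this
            intro h; exact this (congrArg Sum.inr h)
        have hcx2 : c ∈ ccWitA A S σ x2 := (witA_iff h2).2 (hme ▸ hmW)
        have hcx1 : c ∈ ccWitA A S σ x1 := by
          rw [ha2] at hcx2
          rcases hcx2 with h | h; · exact absurd h hca
          · exact h
        obtain ⟨f, hfx1, hftop⟩ := pair_event hσ h1 ((witA_iff h1).1 hcx1)
        exact ⟨f, hfx1, c, hftop, hme ▸ hqm⟩
      | .inl s' =>
        have hme : m = ((Sum.inl s', Sum.inl (σ s')) : PT A S) := by
          refine Prod.ext hu ?_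
          rw [hsync, hu]; rfl
        rcases hlt with hlt | hlt
        · rw [hu] at hlt; exact hlt.1.elim
        · have hle : Relation.ReflTransGen (ccGen A) (Sum.inl (σ s'))
              (Sum.inr a) := by
            have h := hlt.1; rw [hme] at h; exact h
          obtain ⟨b, hbpol, hcb, hchainb⟩ := cc_le_inl_inr hA _ hle _ rfl
          have hba : b ≠ a := fun h => by rw [h, hpola] at hbpol; cases hbpol
          have htop2 : (Sum.inr a : (CC A).Evt) ∈ Prod.snd '' WU A S σ x2 :=
            ⟨(Sum.inr a, Sum.inr a), graph_sub_WU hex2 hta.1, rfl⟩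
          have hmem2 : (Sum.inr b : (CC A).Evt) ∈ Prod.snd '' WU A S σ x2 :=
            hW2.cfg2.2.2 _ htop2 _ hchainb
          obtain ⟨r, hrW2, hr2⟩ := hmem2
          have hrsync := hW2.sync hrW2
          have hr1 : r.1 = Sum.inr b := by
            rcases hr1v : r.1 with s'' | c'
            · rw [hrsync, hr1v] at hr2; exact absurd hr2 (by simp)
            · rw [hrsync, hr1v] at hr2
              simp only [sm, Sum.map_inr, id_eq, Sum.inr.injEq] at hr2
              exact congrArg Sum.inr hr2
          have hrW2' : ((Sum.inr b, Sum.inr b) : PT A S) ∈ WU A S σ x2 := by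
            have : r = (Sum.inr b, Sum.inr b) := Prod.ext hr1 hr2
            exact this ▸ hrW2
          have hbx2 : b ∈ ccWitA A S σ x2 := (witA_iff h2).2 hrW2'
          have hbx1 : b ∈ ccWitA A S σ x1 := by
            rw [ha2] at hbx2; rcases hbx2 with h | h
            · exact absurd h hba
            · exact h
          obtain ⟨f, hfx1, hftop⟩ := pair_event hσ h1 ((witA_iff h1).1 hbx1)
          have hstepb : gr A S (WU A S σ x2) m (Sum.inr b, Sum.inr b) := by
            refine ⟨hmW, hrW2', Or.inr ⟨?_, ?_⟩⟩
            · show (CC A).toES.le m.2 (Sum.inr b)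
              rw [hme]
              exact (cc_le_inl hcb).trans (cc_link_pos hbpol)
            · rw [hme]; exact Sum.inl_ne_inr
          exact ⟨f, hfx1, b, hftop, hqm.tail hstepb⟩
  intro s hs
  have hsW2 : ((Sum.inl s, Sum.inl (σ s)) : PT A S) ∈ WU A S σ x2 :=
    (witS_iff h2).1 hs
  rw [he2, WU_insert] at hsW2
  rcases hsW2 with h | h
  · have : ((Sum.inl s, Sum.inl (σ s)) : PT A S) ≠ (Sum.inr a, Sum.inr a) := by
      intro hc; exact absurd (congrArg Prod.fst hc) (by simp)
    exact (witS_iff h1).2 (key _ h this)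
  · exact (witS_iff h1).2 h

end CCAux
namespace CCAux

variable {A S : ESP} {σ : S.Evt → A.Evt}

/-- Backward direction: from the witness covering data, reconstruct the single
added event. -/
lemma backward (hσ : IsPreStrategy S A σ) {x1 x2 : Set (ccCompES A S σ).Evt}
    (h1 : (ccCompES A S σ).Config x1) (h2 : (ccCompES A S σ).Config x2)
    {a} (hWS : ccWitS A S σ x1 ⊆ ccWitS A S σ x2)
    (ha1 : a ∉ ccWitA A S σ x1)
    (ha2 : ccWitA A S σ x2 = insert a (ccWitA A S σ x1)) :
    ∃ e, e ∉ x1 ∧ x2 = insert e x1 ∧ IsTop e a := by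
  have hA12 : ccWitA A S σ x1 ⊆ ccWitA A S σ x2 := by
    rw [ha2]; exact Set.subset_insert a _
  have hW12 : WU A S σ x1 ⊆ WU A S σ x2 := WU_mono h1 h2 hWS hA12
  have ha2' : a ∈ ccWitA A S σ x2 := by rw [ha2]; exact Set.mem_insert a _
  obtain ⟨e, hex2, htop⟩ := pair_event hσ h2 ((witA_iff h2).1 ha2')
  have he1 : e ∉ x1 := fun h => ha1 ((witA_iff h1).2 (graph_sub_WU h htop.1))
  refine ⟨e, he1, ?_, htop⟩
  apply Set.Subset.antisymm
  · intro g hg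
    obtain ⟨b, hgt⟩ := exists_top g
    have hbx2 : b ∈ ccWitA A S σ x2 := (witA_iff h2).2 (graph_sub_WU hg hgt.1)
    rw [ha2] at hbx2
    rcases hbx2 with rfl | hb
    · left
      exact event_eq hσ (config_WU h2) hgt htop (graph_sub_WU hg)
        (graph_sub_WU hex2)
    · right
      obtain ⟨f, hfx1, hftop⟩ := pair_event hσ h1 ((witA_iff h1).1 hb)
      have : g = f := event_eq hσ (config_WU h2) hgt hftop (graph_sub_WU hg)
        ((graph_sub_WU hfx1).trans hW12)
      exact this ▸ hfx1
  · intro g hg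
    rcases hg with rfl | hg
    · exact hex2
    · exact mem_of_sub hσ h2 ((graph_sub_WU hg).trans hW12)

end CCAux
open CCAux in
/-- covering characterisation for compositions with copycat:
`x¹` extends to `x²` by one positive event iff `y¹_S ⊆ y²_S` and `y¹_A`
extends to `y²_A` by one positive event; `x¹` extends to `x²` by one negative
event iff `y¹_S = y²_S` and `y¹_A` extends to `y²_A` by one negative event. -/
theorem covering_characterisation_for_copycat_composition
    (A S : ESP) (hA : A.toES.IsES) (hS : S.toES.IsES)
    (σ : S.Evt → A.Evt) (hσ : IsPreStrategy S A σ)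
    (hrec : Receptive S A σ) (hcourt : Courteous S A σ)
    (x1 x2 : Set (ccCompES A S σ).Evt)
    (h1 : (ccCompES A S σ).Config x1) (h2 : (ccCompES A S σ).Config x2) :
    ((∃ e, e ∉ x1 ∧ x2 = insert e x1 ∧ (ccCompESP A S σ).pol e = true) ↔
      (ccWitS A S σ x1 ⊆ ccWitS A S σ x2 ∧
       ∃ a, a ∉ ccWitA A S σ x1 ∧ ccWitA A S σ x2 = insert a (ccWitA A S σ x1) ∧
         A.pol a = true)) ∧
    ((∃ e, e ∉ x1 ∧ x2 = insert e x1 ∧ (ccCompESP A S σ).pol e = false) ↔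
      (ccWitS A S σ x1 = ccWitS A S σ x2 ∧
       ∃ a, a ∉ ccWitA A S σ x1 ∧ ccWitA A S σ x2 = insert a (ccWitA A S σ x1) ∧
         A.pol a = false)) := by
  constructor
  · constructor
    · rintro ⟨e, he1, he2, hpol⟩
      obtain ⟨a, hta⟩ := exists_top e
      obtain ⟨hWS, ha1, ha2⟩ := forward hσ h1 h2 he1 he2 hta
      have hpola : A.pol a = true := by rw [← pol_eq hta]; exact hpol
      exact ⟨hWS, a, ha1, ha2, hpola⟩
    · rintro ⟨hWS, a, ha1, ha2, hpola⟩
      obtain ⟨e, he1, he2, htop⟩ := backward hσ h1 h2 hWS ha1 ha2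
      exact ⟨e, he1, he2, by rw [pol_eq htop]; exact hpola⟩
  · constructor
    · rintro ⟨e, he1, he2, hpol⟩
      obtain ⟨a, hta⟩ := exists_top e
      obtain ⟨hWS, ha1, ha2⟩ := forward hσ h1 h2 he1 he2 hta
      have hpola : A.pol a = false := by rw [← pol_eq hta]; exact hpol
      have hWS' := forward_neg hσ hA h1 h2 he2 hta ha2 hpola
      exact ⟨Set.Subset.antisymm hWS hWS', a, ha1, ha2, hpola⟩
    · rintro ⟨hWS, a, ha1, ha2, hpola⟩
      obtain ⟨e, he1, he2, htop⟩ := backward hσ h1 h2 hWS.le ha1 ha2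
      exact ⟨e, he1, he2, by rw [pol_eq htop]; exact hpola⟩
end

section
/- Let σ : S → A be a pre-strategy and x ∈ C(S). There is a unique x* ⊆ x with x* ∈ C(S) such that the pair (x*, σx) corresponds (via Ψ) to a configuration of CC_A ⊛ S and all maximal events of this configuration are visible. (Explicitly, x* = [x⁺], the down-closure in S of the set of positive events of x.) -/
section CCProofHelpers

open Relation

variable {A S : ESP}

lemma config_mono {E : ES} {x y : Set E.Evt} (hx : E.Config x) (hyx : y ⊆ x)
    (hdc : ∀ e ∈ y, ∀ e', E.le e' e → e' ∈ y) : E.Config y :=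
  ⟨hx.1.subset hyx, fun Y hY hYf => hx.2.1 Y (hY.trans hyx) hYf, hdc⟩

lemma downset_config {E : ES} (hE : E.IsES) {x : Set E.Evt} (hx : E.Config x)
    {s : E.Evt} (hs : s ∈ x) : E.Config {u | E.le u s} :=
  config_mono hx (fun u hu => hx.2.2 s hs u hu)
    (fun e he e' he' => hE.2.1 e' e s he' he)

lemma sigma_reflects (hS : S.toES.IsES) {σ : S.Evt → A.Evt}
    (hmap : IsMap S.toES A.toES σ) {x : Set S.Evt} (hx : S.toES.Config x)
    {t t' : S.Evt} (ht : t ∈ x) (ht' : t' ∈ x) (h : A.le (σ t) (σ t')) :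
    S.le t t' := by
  have hdt' : S.toES.Config {u | S.le u t'} := downset_config hS hx ht'
  have himg := hmap.1 _ hdt'
  have hmem : σ t ∈ σ '' {u | S.le u t'} :=
    himg.2.2 (σ t') ⟨t', hS.1 t', rfl⟩ (σ t) h
  obtain ⟨u, hu, hut⟩ := hmem
  have hux : u ∈ x := hx.2.2 t' ht' u hu
  have heq : u = t := hmap.2 x hx hux ht hut
  exact heq ▸ hu

/-- Characterization of the copycat causal order. -/
def ccChar (A : ESP) : (A.Evt ⊕ A.Evt) → (A.Evt ⊕ A.Evt) → Prop := fun p q =>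
  match p, q with
  | Sum.inl a, Sum.inl b => A.le a b
  | Sum.inl a, Sum.inr b => ∃ c, A.pol c = true ∧ A.le a c ∧ A.le c b
  | Sum.inr a, Sum.inl b => ∃ c, A.pol c = false ∧ A.le a c ∧ A.le c b
  | Sum.inr a, Sum.inr b => A.le a b

lemma cc_le_char (hA : A.toES.IsES) {p q : A.Evt ⊕ A.Evt}
    (h : Relation.ReflTransGen (ccGen A) p q) : ccChar A p q := by
  induction h with
  | refl =>
    cases p with
    | inl a => exact hA.1 a
    | inr a => exact hA.1 a
  | @tail b c hpb hstep ih =>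
    rcases hstep with hle | ⟨a, hpol, rfl, rfl⟩ | ⟨a, hpol, rfl, rfl⟩
    · cases b with
      | inl b' =>
        cases c with
        | inl c' =>
          have hbc : A.le b' c' := hle
          cases p with
          | inl a' => exact hA.2.1 _ _ _ ih hbc
          | inr a' =>
            obtain ⟨d, hd, h1, h2⟩ := ih
            exact ⟨d, hd, h1, hA.2.1 _ _ _ h2 hbc⟩
        | inr c' => exact hle.elim
      | inr b' =>
        cases c with
        | inl c' => exact hle.elim
        | inr c' =>
          have hbc : A.le b' c' := hle
          cases p with
          | inl a' =>
            obtain ⟨d, hd, h1, h2⟩ := ih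
            exact ⟨d, hd, h1, hA.2.1 _ _ _ h2 hbc⟩
          | inr a' => exact hA.2.1 _ _ _ ih hbc
    · cases p with
      | inl a' => exact ⟨a, hpol, ih, hA.1 a⟩
      | inr a' =>
        obtain ⟨d, hd, h1, h2⟩ := ih
        exact hA.2.1 _ _ _ h1 h2
    · cases p with
      | inl a' =>
        obtain ⟨d, hd, h1, h2⟩ := ih
        exact hA.2.1 _ _ _ h1 h2
      | inr a' => exact ⟨a, hpol, ih, hA.1 a⟩

/-- The "semantic" partial order witnessing securedness of the copycat
interaction graph. -/
def TOrd (A S : ESP) (σ : S.Evt → A.Evt) (x : Set S.Evt) :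
    (S.Evt ⊕ A.Evt) → (S.Evt ⊕ A.Evt) → Prop := fun p q =>
  match p, q with
  | Sum.inl s, Sum.inl s' => S.le s s'
  | Sum.inl s, Sum.inr a =>
      ∃ t, t ∈ x ∧ S.le s t ∧ ∃ c, A.pol c = true ∧ A.le (σ t) c ∧ A.le c a
  | Sum.inr a, Sum.inl s =>
      ∃ t, t ∈ x ∧ S.le t s ∧ ∃ c, A.pol c = false ∧ A.le a c ∧ A.le c (σ t)
  | Sum.inr a, Sum.inr a' => A.le a a' ∨
      ∃ t t', t ∈ x ∧ t' ∈ x ∧ S.le t t' ∧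
        (∃ c, A.pol c = false ∧ A.le a c ∧ A.le c (σ t)) ∧
        (∃ c, A.pol c = true ∧ A.le (σ t') c ∧ A.le c a')

lemma tord_trans (hA : A.toES.IsES) (hS : S.toES.IsES) {σ : S.Evt → A.Evt}
    (hmap : IsMap S.toES A.toES σ) {x : Set S.Evt} (hx : S.toES.Config x)
    {p q r : S.Evt ⊕ A.Evt}
    (h1 : TOrd A S σ x p q) (h2 : TOrd A S σ x q r) : TOrd A S σ x p r := by
  have tA := hA.2.1
  have tS := hS.2.1
  have hrefl : ∀ {t t' : S.Evt}, t ∈ x → t' ∈ x → A.le (σ t) (σ t') → S.le t t' :=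
    fun ht ht' h => sigma_reflects hS hmap hx ht ht' h
  cases p with
  | inl s =>
    cases q with
    | inl s' =>
      cases r with
      | inl s'' => exact tS _ _ _ h1 h2
      | inr a =>
        obtain ⟨t, ht, hst, hc⟩ := h2
        exact ⟨t, ht, tS _ _ _ h1 hst, hc⟩
    | inr a =>
      cases r with
      | inl s' =>
        obtain ⟨t1, ht1, hst1, c1, hc1p, hc1l, hc1r⟩ := h1
        obtain ⟨t2, ht2, ht2s, c2, hc2p, hc2l, hc2r⟩ := h2
        have hmm : A.le (σ t1) (σ t2) :=
          tA _ _ _ hc1l (tA _ _ _ hc1r (tA _ _ _ hc2l hc2r))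
        exact tS _ _ _ hst1 (tS _ _ _ (hrefl ht1 ht2 hmm) ht2s)
      | inr a' =>
        obtain ⟨t1, ht1, hst1, c1, hc1p, hc1l, hc1r⟩ := h1
        rcases h2 with h2 | ⟨t, t', htx, ht'x, htt', ⟨d, hdp, hdl, hdr⟩, c2, hc2p, hc2l, hc2r⟩
        · exact ⟨t1, ht1, hst1, c1, hc1p, hc1l, tA _ _ _ hc1r h2⟩
        · have hmm : A.le (σ t1) (σ t) :=
            tA _ _ _ hc1l (tA _ _ _ hc1r (tA _ _ _ hdl hdr))
          exact ⟨t', ht'x, tS _ _ _ hst1 (tS _ _ _ (hrefl ht1 htx hmm) htt'),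
            c2, hc2p, hc2l, hc2r⟩
  | inr a =>
    cases q with
    | inl s =>
      cases r with
      | inl s' =>
        obtain ⟨t, ht, hts, hc⟩ := h1
        exact ⟨t, ht, tS _ _ _ hts h2, hc⟩
      | inr a' =>
        obtain ⟨t1, ht1, ht1s, c1, hc1⟩ := h1
        obtain ⟨t2, ht2, hst2, c2, hc2⟩ := h2
        exact Or.inr ⟨t1, t2, ht1, ht2, tS _ _ _ ht1s hst2, ⟨c1, hc1⟩, ⟨c2, hc2⟩⟩
    | inr a' =>
      cases r with
      | inl s =>
        obtain ⟨t2, ht2, ht2s, c2, hc2p, hc2l, hc2r⟩ := h2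
        rcases h1 with h1 | ⟨t, t', htx, ht'x, htt', ⟨c1, hc1⟩, d, hdp, hdl, hdr⟩
        · exact ⟨t2, ht2, ht2s, c2, hc2p, tA _ _ _ h1 hc2l, hc2r⟩
        · have hmm : A.le (σ t') (σ t2) :=
            tA _ _ _ hdl (tA _ _ _ hdr (tA _ _ _ hc2l hc2r))
          exact ⟨t, htx, tS _ _ _ htt' (tS _ _ _ (hrefl ht'x ht2 hmm) ht2s), c1, hc1⟩
      | inr a'' =>
        rcases h1 with h1 | ⟨t1, t1', ht1x, ht1'x, h11', hneg1, d1, hd1p, hd1l, hd1r⟩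
        · rcases h2 with h2 | ⟨t2, t2', ht2x, ht2'x, h22', ⟨e, hep, hel, her⟩, hpos2⟩
          · exact Or.inl (tA _ _ _ h1 h2)
          · exact Or.inr ⟨t2, t2', ht2x, ht2'x, h22', ⟨e, hep, tA _ _ _ h1 hel, her⟩, hpos2⟩
        · rcases h2 with h2 | ⟨t2, t2', ht2x, ht2'x, h22', ⟨e, hep, hel, her⟩, hpos2⟩
          · exact Or.inr ⟨t1, t1', ht1x, ht1'x, h11', hneg1, d1, hd1p, hd1l, tA _ _ _ hd1r h2⟩
          · have hmm : A.le (σ t1') (σ t2) :=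
              tA _ _ _ hd1l (tA _ _ _ hd1r (tA _ _ _ hel her))
            exact Or.inr ⟨t1, t2', ht1x, ht2'x,
              tS _ _ _ h11' (tS _ _ _ (hrefl ht1'x ht2x hmm) h22'), hneg1, hpos2⟩

lemma tord_antisymm (hA : A.toES.IsES) (hS : S.toES.IsES) {σ : S.Evt → A.Evt}
    (hmap : IsMap S.toES A.toES σ) {x : Set S.Evt} (hx : S.toES.Config x)
    {p q : S.Evt ⊕ A.Evt}
    (h1 : TOrd A S σ x p q) (h2 : TOrd A S σ x q p) : p = q := by
  have tA := hA.2.1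
  have aA := hA.2.2.1
  have tS := hS.2.1
  have aS := hS.2.2.1
  have hrefl : ∀ {t t' : S.Evt}, t ∈ x → t' ∈ x → A.le (σ t) (σ t') → S.le t t' :=
    fun ht ht' h => sigma_reflects hS hmap hx ht ht' h
  cases p with
  | inl s =>
    cases q with
    | inl s' => exact congrArg Sum.inl (aS _ _ h1 h2)
    | inr a =>
      exfalso
      obtain ⟨t1, ht1, hst1, c1, hc1p, hc1l, hc1r⟩ := h1
      obtain ⟨t2, ht2, ht2s, c2, hc2p, hc2l, hc2r⟩ := h2
      have h12 : A.le (σ t1) (σ t2) :=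
        tA _ _ _ hc1l (tA _ _ _ hc1r (tA _ _ _ hc2l hc2r))
      have ht12 : S.le t1 t2 := hrefl ht1 ht2 h12
      have he : t1 = t2 := aS _ _ ht12 (tS _ _ _ ht2s hst1)
      subst he
      have e1 : c1 = c2 :=
        aA _ _ (tA _ _ _ hc1r hc2l) (tA _ _ _ hc2r hc1l)
      rw [e1, hc2p] at hc1p
      exact Bool.noConfusion hc1p
  | inr a =>
    cases q with
    | inl s =>
      exfalso
      obtain ⟨t1, ht1, ht1s, c1, hc1p, hc1l, hc1r⟩ := h1
      obtain ⟨t2, ht2, hst2, c2, hc2p, hc2l, hc2r⟩ := h2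
      have h21 : A.le (σ t2) (σ t1) :=
        tA _ _ _ hc2l (tA _ _ _ hc2r (tA _ _ _ hc1l hc1r))
      have ht21 : S.le t2 t1 := hrefl ht2 ht1 h21
      have he : t2 = t1 := aS _ _ ht21 (tS _ _ _ ht1s hst2)
      subst he
      have e1 : c2 = c1 :=
        aA _ _ (tA _ _ _ hc2r hc1l) (tA _ _ _ hc1r hc2l)
      rw [e1, hc1p] at hc2p
      exact Bool.noConfusion hc2p
    | inr a' =>
      rcases h1 with h1 | ⟨t1, t1', ht1x, ht1'x, h11', ⟨c1, hc1p, hc1l, hc1r⟩, d1, hd1p, hd1l, hd1r⟩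
      · rcases h2 with h2 | ⟨t2, t2', ht2x, ht2'x, h22', ⟨c2, hc2p, hc2l, hc2r⟩, d2, hd2p, hd2l, hd2r⟩
        · exact congrArg Sum.inr (aA _ _ h1 h2)
        · -- h1 : a ≤ a',  a' ≤ c2 ≤ σ t2, σ t2' ≤ d2 ≤ a
          have hm : A.le (σ t2') (σ t2) :=
            tA _ _ _ hd2l (tA _ _ _ hd2r (tA _ _ _ h1 (tA _ _ _ hc2l hc2r)))
          have he : t2 = t2' := aS _ _ h22' (hrefl ht2'x ht2x hm)
          subst he
          have : A.le a' a :=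
            tA _ _ _ hc2l (tA _ _ _ hc2r (tA _ _ _ hd2l hd2r))
          exact congrArg Sum.inr (aA _ _ h1 this)
      · rcases h2 with h2 | ⟨t2, t2', ht2x, ht2'x, h22', ⟨c2, hc2p, hc2l, hc2r⟩, d2, hd2p, hd2l, hd2r⟩
        · -- h2 : a' ≤ a, a ≤ c1 ≤ σ t1, σ t1' ≤ d1 ≤ a'
          have hm : A.le (σ t1') (σ t1) :=
            tA _ _ _ hd1l (tA _ _ _ hd1r (tA _ _ _ h2 (tA _ _ _ hc1l hc1r)))
          have he : t1 = t1' := aS _ _ h11' (hrefl ht1'x ht1x hm)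
          subst he
          have : A.le a a' :=
            tA _ _ _ hc1l (tA _ _ _ hc1r (tA _ _ _ hd1l hd1r))
          exact congrArg Sum.inr (aA _ _ this h2)
        · exfalso
          -- a ≤ c1 ≤ σ t1, t1 ≤ t1', σ t1' ≤ d1 ≤ a',
          -- a' ≤ c2 ≤ σ t2, t2 ≤ t2', σ t2' ≤ d2 ≤ a
          have hm1 : A.le (σ t1') (σ t2) :=
            tA _ _ _ hd1l (tA _ _ _ hd1r (tA _ _ _ hc2l hc2r))
          have hm2 : A.le (σ t2') (σ t1) :=
            tA _ _ _ hd2l (tA _ _ _ hd2r (tA _ _ _ hc1l hc1r))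
          have h1'2 : S.le t1' t2 := hrefl ht1'x ht2x hm1
          have h2'1 : S.le t2' t1 := hrefl ht2'x ht1x hm2
          have e1 : t1 = t1' :=
            aS _ _ h11' (tS _ _ _ h1'2 (tS _ _ _ h22' h2'1))
          have e2 : t2' = t1 :=
            aS _ _ h2'1 (tS _ _ _ (e1 ▸ h1'2) h22')
          -- now σ t2' = σ t1 and d2 ≤ a ≤ c1 with c1 ≤ σ t1 ≤ ... 
          have hda : A.le d2 c1 := tA _ _ _ hd2r hc1l
          have hcd : A.le c1 d2 := by
            have h1 : A.le c1 (σ t1) := hc1r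
            have h2 : A.le (σ t2') d2 := hd2l
            rw [e2] at h2
            exact tA _ _ _ h1 h2
          have e3 : c1 = d2 := aA _ _ hcd hda
          rw [e3, hd2p] at hc1p
          exact Bool.noConfusion hc1p

lemma ccGraph_fst {σ : S.Evt → A.Evt} (xS : Set S.Evt) (xA : Set A.Evt) :
    Prod.fst '' ccGraph A S σ xS xA = Sum.inl '' xS ∪ Sum.inr '' xA := by
  ext u
  constructor
  · rintro ⟨⟨p1, p2⟩, ⟨h1, h2⟩, rfl⟩
    exact h1
  · intro hu
    exact ⟨(u, Sum.map σ id u), ⟨hu, rfl⟩, rfl⟩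

lemma ccGraph_snd {σ : S.Evt → A.Evt} (xS : Set S.Evt) (xA : Set A.Evt) :
    Prod.snd '' ccGraph A S σ xS xA = Sum.inl '' (σ '' xS) ∪ Sum.inr '' xA := by
  ext v
  constructor
  · rintro ⟨⟨p1, p2⟩, ⟨h1, h2⟩, rfl⟩
    dsimp only at h1 h2 ⊢
    subst h2
    rcases h1 with ⟨s, hs, rfl⟩ | ⟨a, ha, rfl⟩
    · exact Or.inl ⟨σ s, ⟨s, hs, rfl⟩, rfl⟩
    · exact Or.inr ⟨a, ha, rfl⟩
  · rintro (⟨b, ⟨s, hs, rfl⟩, rfl⟩ | ⟨a, ha, rfl⟩)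
    · exact ⟨(Sum.inl s, Sum.inl (σ s)), ⟨Or.inl ⟨s, hs, rfl⟩, rfl⟩, rfl⟩
    · exact ⟨(Sum.inr a, Sum.inr a), ⟨Or.inr ⟨a, ha, rfl⟩, rfl⟩, rfl⟩

lemma grel_tord (hA : A.toES.IsES) (hS : S.toES.IsES) {σ : S.Evt → A.Evt}
    (hmap : IsMap S.toES A.toES σ) {x : Set S.Evt} (hx : S.toES.Config x)
    {xS : Set S.Evt} (hxSx : xS ⊆ x)
    {p q : (S.Evt ⊕ A.Evt) × (A.Evt ⊕ A.Evt)}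
    (h : gRel (S.toES.par A.toES) (CC A).toES (ccGraph A S σ xS (σ '' x)) p q) :
    TOrd A S σ x p.1 q.1 := by
  obtain ⟨⟨hp1, hp2⟩, ⟨hq1, hq2⟩, hlt⟩ := h
  obtain ⟨p1, p2⟩ := p
  obtain ⟨q1, q2⟩ := q
  simp only at hp1 hp2 hq1 hq2 ⊢
  subst hp2
  subst hq2
  rcases hp1 with ⟨s, hs, heqp⟩ | ⟨a, ha, heqp⟩ <;> subst heqp <;>
    rcases hq1 with ⟨s', hs', heqq⟩ | ⟨a', ha', heqq⟩ <;> subst heqq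
  · rcases hlt with ⟨hle, _⟩ | ⟨hle, _⟩
    · exact hle
    · exact sigma_reflects hS hmap hx (hxSx hs) (hxSx hs') (cc_le_char hA hle)
  · rcases hlt with ⟨hle, _⟩ | ⟨hle, _⟩
    · exact hle.elim
    · obtain ⟨c, hcp, hcl, hcr⟩ := cc_le_char hA hle
      exact ⟨s, hxSx hs, hS.1 s, c, hcp, hcl, hcr⟩
  · rcases hlt with ⟨hle, _⟩ | ⟨hle, _⟩
    · exact hle.elim
    · obtain ⟨c, hcp, hcl, hcr⟩ := cc_le_char hA hle
      exact ⟨s', hxSx hs', hS.1 s', c, hcp, hcl, hcr⟩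
  · rcases hlt with ⟨hle, _⟩ | ⟨hle, _⟩
    · exact Or.inl hle
    · exact Or.inl (cc_le_char hA hle)

lemma rt_tord (hA : A.toES.IsES) (hS : S.toES.IsES) {σ : S.Evt → A.Evt}
    (hmap : IsMap S.toES A.toES σ) {x : Set S.Evt} (hx : S.toES.Config x)
    {xS : Set S.Evt} (hxSx : xS ⊆ x)
    {p q : (S.Evt ⊕ A.Evt) × (A.Evt ⊕ A.Evt)}
    (h : Relation.ReflTransGen
      (gRel (S.toES.par A.toES) (CC A).toES (ccGraph A S σ xS (σ '' x))) p q) :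
    p = q ∨ (p ∈ ccGraph A S σ xS (σ '' x) ∧ q ∈ ccGraph A S σ xS (σ '' x) ∧
      TOrd A S σ x p.1 q.1) := by
  induction h with
  | refl => exact Or.inl rfl
  | @tail b c hpb hstep ih =>
    have hb := hstep.1
    have hc := hstep.2.1
    have ht := grel_tord hA hS hmap hx hxSx hstep
    rcases ih with rfl | ⟨hpG, hbG, htord⟩
    · exact Or.inr ⟨hb, hc, ht⟩
    · exact Or.inr ⟨hpG, hc, tord_trans hA hS hmap hx htord ht⟩

lemma ccGraph_secured (hA : A.toES.IsES) (hS : S.toES.IsES) {σ : S.Evt → A.Evt}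
    (hmap : IsMap S.toES A.toES σ) {x : Set S.Evt} (hx : S.toES.Config x)
    {xS : Set S.Evt} (hxSx : xS ⊆ x) :
    SecuredOn (S.toES.par A.toES) (CC A).toES (ccGraph A S σ xS (σ '' x)) := by
  intro p q hpq hqp
  rcases rt_tord hA hS hmap hx hxSx hpq with rfl | ⟨hpG, hqG, h1⟩
  · rfl
  rcases rt_tord hA hS hmap hx hxSx hqp with heq | ⟨_, _, h2⟩
  · exact heq.symm
  have h11 : p.1 = q.1 := tord_antisymm hA hS hmap hx h1 h2
  have h22 : p.2 = q.2 := by rw [hpG.2, hqG.2, h11]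
  exact Prod.ext h11 h22

lemma par_config {E F : ES} {xE : Set E.Evt} {xF : Set F.Evt}
    (hE : E.Config xE) (hF : F.Config xF) :
    (E.par F).Config (Sum.inl '' xE ∪ Sum.inr '' xF) := by
  refine ⟨(hE.1.image _).union (hF.1.image _), ?_, ?_⟩
  · intro Y hY hYf
    refine ⟨hE.2.1 _ ?_ (hYf.preimage Sum.inl_injective.injOn),
            hF.2.1 _ ?_ (hYf.preimage Sum.inr_injective.injOn)⟩
    · intro s hs
      rcases hY hs with ⟨u, hu, he⟩ | ⟨u, hu, he⟩
      · obtain rfl := Sum.inl_injective he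
        exact hu
      · simp at he
    · intro s hs
      rcases hY hs with ⟨u, hu, he⟩ | ⟨u, hu, he⟩
      · simp at he
      · obtain rfl := Sum.inr_injective he
        exact hu
  · rintro e (⟨u, hu, rfl⟩ | ⟨u, hu, rfl⟩) e' hle
    · cases e' with
      | inl v => exact Or.inl ⟨v, hE.2.2 u hu v hle, rfl⟩
      | inr v => exact hle.elim
    · cases e' with
      | inl v => exact hle.elim
      | inr v => exact Or.inr ⟨v, hF.2.2 u hu v hle, rfl⟩

lemma cc_config (hA : A.toES.IsES) {y z : Set A.Evt}
    (hy : A.toES.Config y) (hz : A.toES.Config z) (hyz : y ⊆ z)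
    (hpos : ∀ a ∈ z, A.pol a = true → a ∈ y) :
    (CC A).toES.Config (Sum.inl '' y ∪ Sum.inr '' z) := by
  have hdc : ∀ e ∈ Sum.inl '' y ∪ Sum.inr '' z, ∀ e',
      Relation.ReflTransGen (ccGen A) e' e → e' ∈ Sum.inl '' y ∪ Sum.inr '' z := by
    rintro e (⟨a, ha, rfl⟩ | ⟨a, ha, rfl⟩) e' hle
    · have hch := cc_le_char hA hle
      cases e' with
      | inl b => exact Or.inl ⟨b, hy.2.2 a ha b hch, rfl⟩
      | inr b =>
        obtain ⟨c, hcp, hbc, hca⟩ := hch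
        exact Or.inr ⟨b, hz.2.2 c (hyz (hy.2.2 a ha c hca)) b hbc, rfl⟩
    · have hch := cc_le_char hA hle
      cases e' with
      | inl b =>
        obtain ⟨c, hcp, hbc, hca⟩ := hch
        exact Or.inl ⟨b, hy.2.2 c (hpos c (hz.2.2 a ha c hca) hcp) b hbc, rfl⟩
      | inr b => exact Or.inr ⟨b, hz.2.2 a ha b hch, rfl⟩
  have hfin : (Sum.inl '' y ∪ Sum.inr '' z).Finite :=
    (hy.1.image _).union (hz.1.image _)
  refine ⟨hfin, ?_, hdc⟩
  intro Y hY hYf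
  show {e | ∃ e' ∈ Y, Relation.ReflTransGen (ccGen A) e e'} ∈ (A.dual.par A).Con
  have hcl : {e | ∃ e' ∈ Y, Relation.ReflTransGen (ccGen A) e e'} ⊆
      Sum.inl '' y ∪ Sum.inr '' z := by
    rintro e ⟨e', he', hle⟩
    exact hdc e' (hY he') e hle
  have hclf : {e | ∃ e' ∈ Y, Relation.ReflTransGen (ccGen A) e e'}.Finite :=
    hfin.subset hcl
  constructor
  · refine hz.2.1 _ ?_ (hclf.preimage Sum.inl_injective.injOn)
    intro b hb
    rcases hcl hb with ⟨u, hu, he⟩ | ⟨u, hu, he⟩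
    · obtain rfl := Sum.inl_injective he
      exact hyz hu
    · simp at he
  · refine hz.2.1 _ ?_ (hclf.preimage Sum.inr_injective.injOn)
    intro b hb
    rcases hcl hb with ⟨u, hu, he⟩ | ⟨u, hu, he⟩
    · simp at he
    · obtain rfl := Sum.inr_injective he
      exact hu

end CCProofHelpers

/-- for `x ∈ C(S)` there is a unique `x* ⊆ x`, namely the
down-closure `[x⁺]` of the positive events of `x`, such that `(x*, σ x)`
corresponds via `Ψ` to a configuration of `CC_A ⊛ S` all of whose maximal
events are visible. -/
theorem unique_minimal_witness
    (A S : ESP) (hA : A.toES.IsES) (hS : S.toES.IsES)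
    (σ : S.Evt → A.Evt) (hσ : IsPreStrategy S A σ)
    (x : Set S.Evt) (hx : S.toES.Config x) :
    (({s | ∃ s' ∈ x, S.pol s' = true ∧ S.le s s'} : Set S.Evt) ⊆ x ∧
     S.toES.Config {s | ∃ s' ∈ x, S.pol s' = true ∧ S.le s s'} ∧
     IsSecBij (S.toES.par A.toES) (CC A).toES (A.toES.par A.toES)
       (Sum.map σ id) id
       (ccGraph A S σ {s | ∃ s' ∈ x, S.pol s' = true ∧ S.le s s'} (σ '' x)) ∧
     MaxVis A S σ
       (ccGraph A S σ {s | ∃ s' ∈ x, S.pol s' = true ∧ S.le s s'} (σ '' x))) ∧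
    ∀ x' : Set S.Evt, x' ⊆ x → S.toES.Config x' →
      IsSecBij (S.toES.par A.toES) (CC A).toES (A.toES.par A.toES)
        (Sum.map σ id) id (ccGraph A S σ x' (σ '' x)) →
      MaxVis A S σ (ccGraph A S σ x' (σ '' x)) →
      x' = {s | ∃ s' ∈ x, S.pol s' = true ∧ S.le s s'} := by
  obtain ⟨hmap, hpolp⟩ := hσ
  have hsub : {s | ∃ s' ∈ x, S.pol s' = true ∧ S.le s s'} ⊆ x := by
    rintro s ⟨s', hs', -, hle⟩
    exact hx.2.2 s' hs' s hle
  have hstar : S.toES.Config {s | ∃ s' ∈ x, S.pol s' = true ∧ S.le s s'} := by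
    refine config_mono hx hsub ?_
    rintro e ⟨s', hs', hp, hle⟩ e' hle'
    exact ⟨s', hs', hp, hS.2.1 _ _ _ hle' hle⟩
  have hσx : A.toES.Config (σ '' x) := hmap.1 x hx
  have hbij : ∀ x' : Set S.Evt, x' ⊆ x → S.toES.Config x' →
      (∀ a ∈ σ '' x, A.pol a = true → a ∈ σ '' x') →
      IsSecBij (S.toES.par A.toES) (CC A).toES (A.toES.par A.toES)
        (Sum.map σ id) id (ccGraph A S σ x' (σ '' x)) := by
    intro x' hx'x hx'c hpos
    refine ⟨?_, ?_, ?_, ?_, ?_, ccGraph_secured hA hS hmap hx hx'x⟩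
    · erw [ccGraph_fst]
      exact par_config hx'c hσx
    · erw [ccGraph_snd]
      exact cc_config hA (hmap.1 x' hx'c) hσx (Set.image_mono hx'x) hpos
    · intro p hp
      exact hp.2.symm
    · intro s hs t ht heq
      erw [ccGraph_fst] at hs
      exact ⟨hs, heq.symm⟩
    · erw [ccGraph_fst, ccGraph_snd, Set.image_id, Set.image_union]
      congr 1
      · ext v
        constructor
        · rintro ⟨u, ⟨s, hs, rfl⟩, rfl⟩
          exact ⟨σ s, ⟨s, hs, rfl⟩, rfl⟩
        · rintro ⟨b, ⟨s, hs, rfl⟩, rfl⟩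
          exact ⟨Sum.inl s, ⟨s, hs, rfl⟩, rfl⟩
      · ext v
        constructor
        · rintro ⟨u, ⟨a, ha, rfl⟩, rfl⟩
          exact ⟨a, ha, rfl⟩
        · rintro ⟨a, ha, rfl⟩
          exact ⟨Sum.inr a, ⟨a, ha, rfl⟩, rfl⟩
  have hpos : ∀ a ∈ σ '' x, A.pol a = true →
      a ∈ σ '' {s | ∃ s' ∈ x, S.pol s' = true ∧ S.le s s'} := by
    rintro a ⟨u, hux, rfl⟩ hp
    exact ⟨u, ⟨u, hux, by rw [← hpolp u]; exact hp, hS.1 u⟩, rfl⟩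
  have hmaxvis : MaxVis A S σ
      (ccGraph A S σ {s | ∃ s' ∈ x, S.pol s' = true ∧ S.le s s'} (σ '' x)) := by
    rintro ⟨p1, p2⟩ ⟨hp1, hp2⟩ hmax
    dsimp only at hp1 hp2 ⊢
    subst hp2
    rcases hp1 with ⟨s, hs, rfl⟩ | ⟨a, ha, rfl⟩
    · exfalso
      obtain ⟨s', hs'x, hp', hss'⟩ := hs
      by_cases hne : s = s'
      · subst hne
        have hq : (Sum.inr (σ s), Sum.inr (σ s)) ∈
            ccGraph A S σ {s | ∃ s' ∈ x, S.pol s' = true ∧ S.le s s'} (σ '' x) :=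
          ⟨Or.inr ⟨σ s, ⟨s, hs'x, rfl⟩, rfl⟩, rfl⟩
        have hgr : gRel (S.toES.par A.toES) (CC A).toES
            (ccGraph A S σ {s | ∃ s' ∈ x, S.pol s' = true ∧ S.le s s'} (σ '' x))
            (Sum.inl s, Sum.map σ id (Sum.inl s)) (Sum.inr (σ s), Sum.inr (σ s)) := by
          refine ⟨⟨Or.inl ⟨s, ⟨s, hs'x, hp', hS.1 s⟩, rfl⟩, rfl⟩, hq, Or.inr ⟨?_, Sum.inl_ne_inr⟩⟩
          exact Relation.ReflTransGen.single
            (Or.inr (Or.inl ⟨σ s, by rw [hpolp s]; exact hp', rfl, rfl⟩))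
        have := hmax _ hq (Relation.ReflTransGen.single hgr)
        simp at this
      · have hq : (Sum.inl s', Sum.map σ id (Sum.inl s')) ∈
            ccGraph A S σ {s | ∃ s' ∈ x, S.pol s' = true ∧ S.le s s'} (σ '' x) :=
          ⟨Or.inl ⟨s', ⟨s', hs'x, hp', hS.1 s'⟩, rfl⟩, rfl⟩
        have hgr : gRel (S.toES.par A.toES) (CC A).toES
            (ccGraph A S σ {s | ∃ s' ∈ x, S.pol s' = true ∧ S.le s s'} (σ '' x))
            (Sum.inl s, Sum.map σ id (Sum.inl s))
            (Sum.inl s', Sum.map σ id (Sum.inl s')) := by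
          refine ⟨⟨Or.inl ⟨s, ⟨s', hs'x, hp', hss'⟩, rfl⟩, rfl⟩, hq,
            Or.inl ⟨hss', fun h => hne (Sum.inl_injective h)⟩⟩
        have heq := hmax _ hq (Relation.ReflTransGen.single hgr)
        have := congrArg Prod.fst heq
        simp at this
        exact hne this.symm
    · exact ⟨a, rfl⟩
  refine ⟨⟨hsub, hstar, hbij _ hsub hstar hpos, hmaxvis⟩, ?_⟩
  intro x' hx'x hx'c hsec hmv
  have hIncl2 : {s | ∃ s' ∈ x, S.pol s' = true ∧ S.le s s'} ⊆ x' := by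
    rintro s ⟨s', hs'x, hp', hss'⟩
    have hcfg := hsec.2.1
    erw [ccGraph_snd] at hcfg
    have hmem : Sum.inr (σ s') ∈ Sum.inl '' (σ '' x') ∪ Sum.inr '' (σ '' x) :=
      Or.inr ⟨σ s', ⟨s', hs'x, rfl⟩, rfl⟩
    have hstep : Relation.ReflTransGen (ccGen A) (Sum.inl (σ s')) (Sum.inr (σ s')) :=
      Relation.ReflTransGen.single
        (Or.inr (Or.inl ⟨σ s', by rw [hpolp s']; exact hp', rfl, rfl⟩))
    have hin := hcfg.2.2 _ hmem _ hstep
    rcases hin with ⟨b, ⟨u, hu, rfl⟩, he⟩ | ⟨b, hb, he⟩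
    · have he' : σ u = σ s' := Sum.inl_injective he
      have heq : u = s' := hmap.2 x hx (hx'x hu) hs'x he'
      subst heq
      exact hx'c.2.2 u hu s hss'
    · simp at he
  have hIncl1 : x' ⊆ {s | ∃ s' ∈ x, S.pol s' = true ∧ S.le s s'} := by
    by_contra hcon
    rw [Set.not_subset] at hcon
    obtain ⟨s0', hs0'x', hs0'star⟩ := hcon
    have hWne : (x' \ {s | ∃ s' ∈ x, S.pol s' = true ∧ S.le s s'}).Nonempty :=
      ⟨s0', hs0'x', hs0'star⟩
    have hWfin : (x' \ {s | ∃ s' ∈ x, S.pol s' = true ∧ S.le s s'}).Finite :=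
      hx'c.1.subset Set.diff_subset
    obtain ⟨s0, hs0W, hs0max⟩ := Set.Finite.exists_maximalFor
      (fun t => ({u ∈ x | S.le u t}).ncard) _ hWfin hWne
    have hs0x' : s0 ∈ x' := hs0W.1
    have hpG : (Sum.inl s0, Sum.map σ id (Sum.inl s0)) ∈ ccGraph A S σ x' (σ '' x) :=
      ⟨Or.inl ⟨s0, hs0x', rfl⟩, rfl⟩
    have hkey : ∀ q ∈ ccGraph A S σ x' (σ '' x),
        Relation.ReflTransGen
          (gRel (S.toES.par A.toES) (CC A).toES (ccGraph A S σ x' (σ '' x)))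
          (Sum.inl s0, Sum.map σ id (Sum.inl s0)) q →
        q = (Sum.inl s0, Sum.map σ id (Sum.inl s0)) := by
      intro q hq hrt
      rcases rt_tord hA hS hmap hx hx'x hrt with heq | ⟨-, -, htord⟩
      · exact heq.symm
      obtain ⟨hq1, hq2⟩ := hq
      obtain ⟨q1, q2⟩ := q
      dsimp only at hq1 hq2 htord ⊢
      subst hq2
      rcases hq1 with ⟨t, ht, rfl⟩ | ⟨a, ha, rfl⟩
      · by_cases htstar : t ∈ {s | ∃ s' ∈ x, S.pol s' = true ∧ S.le s s'}
        · exfalso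
          obtain ⟨w, hwx, hwp, htw⟩ := htstar
          exact hs0W.2 ⟨w, hwx, hwp, hS.2.1 _ _ _ htord htw⟩
        · by_cases hst : s0 = t
          · subst hst
            rfl
          · exfalso
            have hsubD : {u ∈ x | S.le u s0} ⊂ {u ∈ x | S.le u t} := by
              constructor
              · rintro u ⟨hux, hus0⟩
                exact ⟨hux, hS.2.1 _ _ _ hus0 htord⟩
              · intro hcontra
                have hmt : t ∈ {u ∈ x | S.le u s0} := hcontra ⟨hx'x ht, hS.1 t⟩
                exact hst (hS.2.2.1 _ _ htord hmt.2)
            have hlt := Set.ncard_lt_ncard hsubD (hx.1.subset fun u hu => hu.1)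
            exact (not_le.mpr hlt) (hs0max ⟨ht, htstar⟩ hlt.le)
      · exfalso
        obtain ⟨t, htx, hs0t, c, hcp, hcl, hcr⟩ := htord
        obtain ⟨u, hux, huc⟩ := hσx.2.2 a ha c hcr
        have hpu : S.pol u = true := by rw [← hpolp u, huc]; exact hcp
        have htu : S.le t u :=
          sigma_reflects hS hmap hx htx hux (by rw [huc]; exact hcl)
        exact hs0W.2 ⟨u, hux, hpu, hS.2.1 _ _ _ hs0t htu⟩
    obtain ⟨a, hfalse⟩ := hmv _ hpG hkey
    simp at hfalse
  exact Set.Subset.antisymm hIncl1 hIncl2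
end
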